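/- arXiv:1407.8149 — 8 statements merged into one kernel-verified Lean document; each statement's English description precedes it below -/
import Mathlib

section
/- The space of normalized convex k-gons in ℝP² (k ≥ 4) is homeomorphic to ℝ^{2k−8}. Concretely, in an affine chart where the first four vertices are q₁=(0,1), q₂=(0,0), q₃=(1,0), q₄=(1,1), the space is parameterized by pairs (x_j, m_j) for j=5,…,k with 1 > x₅ > ⋯ > x_k > 0 and m₅ < ⋯ < m_k, a product of open simplices, hence homeomorphic to an open ball of dimension 2k−8. -/
/-- Planar cross product. -/
def cross2 (a b : ℝ × ℝ) : ℝ := a.1 * b.2 - a.2 * b.1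

/-- A normalized convex `(k+4)`-gon, given by its cyclically ordered list of vertices:
the vertices are in strictly convex position (every other vertex lies strictly on the
positive side of each directed edge), and the first four vertices are the fixed
quadrilateral `q₁ = (0,1)`, `q₂ = (0,0)`, `q₃ = (1,0)`, `q₄ = (1,1)`. -/
def IsNormalizedConvexPolygon {k : ℕ} (v : Fin (k + 4) → ℝ × ℝ) : Prop :=
  (∀ i j : Fin (k + 4), j ≠ i → j ≠ i + 1 →
      0 < cross2 (v (i + 1) - v i) (v j - v i)) ∧
  v 0 = (0, 1) ∧ v 1 = (0, 0) ∧ v 2 = (1, 0) ∧ v 3 = (1, 1)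

set_option linter.unusedSectionVars false
set_option linter.unreachableTactic false
set_option linter.unusedTactic false

namespace NCP

variable {k : ℕ}

def XF (x : Fin k → ℝ) : ℕ → ℝ := fun n =>
  if n = 0 then 1 else if h : n - 1 < k then x ⟨n - 1, h⟩ else 0

def mmF (m : Fin k → ℝ) : ℕ → ℝ := fun n => if h : n < k then m ⟨n, h⟩ else 0

def YF (x m : Fin k → ℝ) : ℕ → ℝ := fun n =>
  if n ≤ k then 1 + ∑ l ∈ Finset.range n, mmF m l * (XF x (l + 1) - XF x l) else 1

def QF (x m : Fin k → ℝ) : ℕ → ℝ × ℝ := fun n => (XF x n, YF x m n)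

noncomputable def sF (x m : Fin k → ℝ) : ℕ → ℝ := fun n =>
  if n < k then mmF m n else (YF x m k - 1) / XF x k

def Pcond (x m : Fin k → ℝ) : Prop :=
  (∀ n ≤ k, XF x (n + 1) < XF x n) ∧ (∀ n, n + 1 ≤ k → sF x m n < sF x m (n + 1))

theorem XF_zero (x : Fin k → ℝ) : XF x 0 = 1 := rfl

theorem XF_top (x : Fin k → ℝ) {n : ℕ} (h : k + 1 ≤ n) : XF x n = 0 := by
  simp only [XF]
  rw [if_neg (by omega), dif_neg (by omega)]

theorem YF_zero (x m : Fin k → ℝ) : YF x m 0 = 1 := by simp [YF]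

theorem YF_top (x m : Fin k → ℝ) {n : ℕ} (h : k + 1 ≤ n) : YF x m n = 1 := by
  simp only [YF]; rw [if_neg (by omega)]

section PC
variable {x m : Fin k → ℝ} (h : Pcond x m)
include h

theorem XF_anti : ∀ a b : ℕ, a < b → b ≤ k + 1 → XF x b < XF x a := by
  intro a b
  induction b with
  | zero => omega
  | succ n ih =>
    intro hab hbk
    rcases Nat.lt_or_ge a n with h' | h'
    · exact (h.1 n (by omega)).trans (ih h' (by omega))
    · have ha : a = n := by omega
      rw [ha]; exact h.1 n (by omega)

theorem XF_pos {n : ℕ} (hn : n ≤ k) : 0 < XF x n := by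
  have := XF_anti h n (k + 1) (by omega) le_rfl
  rwa [XF_top x le_rfl] at this

theorem XF_lt_one {n : ℕ} (h1 : 1 ≤ n) : XF x n < 1 := by
  rcases Nat.lt_or_ge (k + 1) n with h' | h'
  · rw [XF_top x (by omega)]; norm_num
  · simpa [XF_zero] using XF_anti h 0 n h1 h'

theorem sF_mono : ∀ a b : ℕ, a < b → b ≤ k → sF x m a < sF x m b := by
  intro a b
  induction b with
  | zero => omega
  | succ n ih =>
    intro hab hbk
    rcases Nat.lt_or_ge a n with h' | h'
    · exact (ih h' (by omega)).trans (h.2 n (by omega))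
    · have ha : a = n := by omega
      rw [ha]; exact h.2 n (by omega)

theorem YF_succ_sub {n : ℕ} (hn : n ≤ k) :
    YF x m (n + 1) - YF x m n = sF x m n * (XF x (n + 1) - XF x n) := by
  rcases Nat.lt_or_ge n k with h' | h'
  · simp only [YF, sF, if_pos (by omega : n + 1 ≤ k), if_pos (by omega : n ≤ k), if_pos h',
      Finset.sum_range_succ]
    ring
  · have hnk : n = k := by omega
    rw [hnk, YF_top x m le_rfl, XF_top x le_rfl]
    simp only [sF, lt_irrefl, if_neg (lt_irrefl k), if_false]
    field_simp [(XF_pos h le_rfl).ne']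
    ring

omit h in
theorem tele (f : ℕ → ℝ) {a c : ℕ} (hac : a ≤ c) :
    ∑ l ∈ Finset.Ico a c, (f (l + 1) - f l) = f c - f a := by
  rw [Finset.sum_Ico_eq_sub _ hac, Finset.sum_range_sub, Finset.sum_range_sub]
  ring

theorem sum_sDF {a c : ℕ} (hac : a ≤ c) (hck : c ≤ k + 1) :
    ∑ l ∈ Finset.Ico a c, sF x m l * (XF x (l + 1) - XF x l) = YF x m c - YF x m a := by
  rw [← tele (YF x m) hac]
  refine Finset.sum_congr rfl fun l hl => ?_
  rw [Finset.mem_Ico] at hl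
  rw [YF_succ_sub h (by omega)]

theorem cross_edge {a : ℕ} (ha : a ≤ k) (w : ℝ × ℝ) :
    cross2 (QF x m (a + 1) - QF x m a) (w - QF x m a) =
      (XF x (a + 1) - XF x a) *
        ((w.2 - YF x m a) - sF x m a * (w.1 - XF x a)) := by
  have hy := YF_succ_sub h ha
  simp only [cross2, QF, Prod.fst_sub, Prod.snd_sub]
  rw [hy]; ring

theorem DF_neg {l : ℕ} (hl : l ≤ k) : XF x (l + 1) - XF x l < 0 := by
  have := h.1 l hl; linarith

theorem Rdiff_neg {a c : ℕ} (ha : a ≤ k) (hc : c ≤ k + 1) (hca : c ≠ a) (hca1 : c ≠ a + 1) :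
    (YF x m c - YF x m a) - sF x m a * (XF x c - XF x a) < 0 := by
  rcases Nat.lt_or_ge a c with h' | h'
  · have hac : a + 1 < c := by omega
    have e1 : YF x m c - YF x m a =
        ∑ l ∈ Finset.Ico a c, sF x m l * (XF x (l + 1) - XF x l) :=
      (sum_sDF h (by omega) hc).symm
    have e2 : XF x c - XF x a = ∑ l ∈ Finset.Ico a c, (XF x (l + 1) - XF x l) :=
      (tele (XF x) (by omega)).symm
    rw [e1, e2, Finset.mul_sum, ← Finset.sum_sub_distrib]
    have := Finset.sum_lt_sum (s := Finset.Ico a c)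
      (f := fun l => sF x m l * (XF x (l + 1) - XF x l) -
        sF x m a * (XF x (l + 1) - XF x l))
      (g := fun _ => (0 : ℝ))
      (fun l hl => by
        show sF x m l * (XF x (l + 1) - XF x l) - sF x m a * (XF x (l + 1) - XF x l) ≤ (0:ℝ)
        rw [Finset.mem_Ico] at hl
        have hDl := DF_neg h (show l ≤ k by omega)
        rcases Nat.eq_or_lt_of_le hl.1 with h2 | h2
        · rw [← h2]; simp
        · have hs := sF_mono h a l h2 (by omega)
          nlinarith [mul_neg_of_pos_of_neg (show (0:ℝ) < sF x m l - sF x m a by linarith) hDl])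
      ⟨a + 1, Finset.mem_Ico.2 ⟨by omega, hac⟩, by
        show sF x m (a+1) * (XF x (a+1+1) - XF x (a+1)) -
          sF x m a * (XF x (a+1+1) - XF x (a+1)) < (0:ℝ)
        have hs := sF_mono h a (a + 1) (by omega) (by omega)
        have hDl := DF_neg h (show a + 1 ≤ k by omega)
        nlinarith [mul_neg_of_pos_of_neg (show (0:ℝ) < sF x m (a+1) - sF x m a by linarith) hDl]⟩
    simpa using this
  · have hca' : c < a := by omega
    have e1 : YF x m c - YF x m a =
        -∑ l ∈ Finset.Ico c a, sF x m l * (XF x (l + 1) - XF x l) := by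
      rw [sum_sDF h (by omega) (by omega)]; ring
    have e2 : XF x c - XF x a = -∑ l ∈ Finset.Ico c a, (XF x (l + 1) - XF x l) := by
      rw [tele (XF x) (by omega)]; ring
    rw [e1, e2]
    have hpos : 0 < ∑ l ∈ Finset.Ico c a,
        (sF x m l * (XF x (l + 1) - XF x l) - sF x m a * (XF x (l + 1) - XF x l)) := by
      refine Finset.sum_pos ?_ ⟨c, Finset.mem_Ico.2 ⟨le_rfl, hca'⟩⟩
      intro l hl
      rw [Finset.mem_Ico] at hl
      have hDl := DF_neg h (show l ≤ k by omega)
      have hs := sF_mono h l a hl.2 ha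
      nlinarith [mul_pos_of_neg_of_neg (show sF x m l - sF x m a < (0:ℝ) by linarith) hDl]
    have expand : ∑ l ∈ Finset.Ico c a,
        (sF x m l * (XF x (l + 1) - XF x l) - sF x m a * (XF x (l + 1) - XF x l)) =
        ∑ l ∈ Finset.Ico c a, sF x m l * (XF x (l + 1) - XF x l) -
          sF x m a * ∑ l ∈ Finset.Ico c a, (XF x (l + 1) - XF x l) := by
      rw [Finset.mul_sum, ← Finset.sum_sub_distrib]
    rw [expand] at hpos
    linarith

theorem chainCross {a c : ℕ} (ha : a ≤ k) (hc : c ≤ k + 1) (hca : c ≠ a) (hca1 : c ≠ a + 1) :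
    0 < cross2 (QF x m (a + 1) - QF x m a) (QF x m c - QF x m a) := by
  have key := cross_edge h ha (QF x m c)
  rw [key]
  exact mul_pos_of_neg_of_neg (DF_neg h ha) (Rdiff_neg h ha hc hca hca1)

theorem B1 {a : ℕ} (ha : a ≤ k) : 1 - YF x m a ≤ -(sF x m a * XF x a) := by
  have e := sum_sDF h (show a ≤ k + 1 by omega) le_rfl
  rw [YF_top x m le_rfl] at e
  have bound : ∑ l ∈ Finset.Ico a (k + 1), sF x m l * (XF x (l + 1) - XF x l) ≤
      ∑ l ∈ Finset.Ico a (k + 1), sF x m a * (XF x (l + 1) - XF x l) := by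
    refine Finset.sum_le_sum fun l hl => ?_
    rw [Finset.mem_Ico] at hl
    have hDl := DF_neg h (show l ≤ k by omega)
    rcases Nat.eq_or_lt_of_le hl.1 with h2 | h2
    · rw [← h2]
    · have hs := sF_mono h a l h2 (by omega)
      nlinarith
  rw [← Finset.mul_sum, tele (XF x) (by omega), XF_top x le_rfl] at bound
  linarith

theorem B2 {a : ℕ} (ha : a ≤ k) : 1 - YF x m a ≤ sF x m a * (1 - XF x a) := by
  have e := sum_sDF h (Nat.zero_le a) (by omega)
  rw [YF_zero] at e
  have bound : ∑ l ∈ Finset.Ico 0 a, sF x m a * (XF x (l + 1) - XF x l) ≤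
      ∑ l ∈ Finset.Ico 0 a, sF x m l * (XF x (l + 1) - XF x l) := by
    refine Finset.sum_le_sum fun l hl => ?_
    rw [Finset.mem_Ico] at hl
    have hDl := DF_neg h (show l ≤ k by omega)
    have hs := sF_mono h l a hl.2 ha
    nlinarith
  rw [← Finset.mul_sum, tele (XF x) (by omega), XF_zero] at bound
  linarith

theorem YF_interior {c : ℕ} (h1 : 1 ≤ c) (hc : c ≤ k) : 1 < YF x m c := by
  obtain ⟨c', rfl⟩ : ∃ c', c = c' + 1 := ⟨c - 1, by omega⟩
  have upper : sF x m c' * (XF x (c' + 1) - 1) ≤ YF x m (c' + 1) - 1 := by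
    have e := sum_sDF h (Nat.zero_le (c' + 1)) (by omega)
    rw [YF_zero] at e
    have bound : ∑ l ∈ Finset.Ico 0 (c' + 1), sF x m c' * (XF x (l + 1) - XF x l) ≤
        ∑ l ∈ Finset.Ico 0 (c' + 1), sF x m l * (XF x (l + 1) - XF x l) := by
      refine Finset.sum_le_sum fun l hl => ?_
      rw [Finset.mem_Ico] at hl
      have hDl := DF_neg h (show l ≤ k by omega)
      rcases Nat.eq_or_lt_of_le (show l ≤ c' by omega) with h2 | h2
      · rw [h2]
      · have hs := sF_mono h l c' h2 (by omega)
        nlinarith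
    rw [← Finset.mul_sum, tele (XF x) (by omega), XF_zero] at bound
    linarith
  have lower : sF x m (c' + 1) * XF x (c' + 1) ≤ YF x m (c' + 1) - 1 := by
    have := B1 h hc
    nlinarith [sq_nonneg (sF x m (c' + 1) * XF x (c' + 1))]
  rcases lt_or_ge (sF x m c') 0 with hneg | hpos
  · have hX1 := XF_lt_one h (show 1 ≤ c' + 1 by omega)
    nlinarith
  · have hs := sF_mono h c' (c' + 1) (by omega) hc
    have hXp := XF_pos h hc
    nlinarith

theorem Gv1 {a : ℕ} (ha : a ≤ k) :
    0 < cross2 (QF x m (a + 1) - QF x m a) (((0 : ℝ), (0 : ℝ)) - QF x m a) := by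
  rw [cross_edge h ha]
  refine mul_pos_of_neg_of_neg (DF_neg h ha) ?_
  have := B1 h ha
  simp only [Prod.fst, Prod.snd]
  nlinarith

theorem Gv2 {a : ℕ} (ha : a ≤ k) :
    0 < cross2 (QF x m (a + 1) - QF x m a) (((1 : ℝ), (0 : ℝ)) - QF x m a) := by
  rw [cross_edge h ha]
  refine mul_pos_of_neg_of_neg (DF_neg h ha) ?_
  have := B2 h ha
  simp only [Prod.fst, Prod.snd]
  nlinarith

end PC

def VF (x m : Fin k → ℝ) : Fin (k + 4) → ℝ × ℝ := fun i =>
  if i.val = 0 then (0, 1) else if i.val = 1 then (0, 0) else if i.val = 2 then (1, 0)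
  else QF x m (i.val - 3)


theorem QF_zero (x m : Fin k → ℝ) : QF x m 0 = (1, 1) := by
  simp [QF, XF_zero, YF_zero]

theorem QF_top (x m : Fin k → ℝ) : QF x m (k + 1) = (0, 1) := by
  simp [QF, XF_top x le_rfl, YF_top x m le_rfl]

theorem VF_val (x m : Fin k → ℝ) {i : Fin (k + 4)} (h3 : 3 ≤ i.val) :
    VF x m i = QF x m (i.val - 3) := by
  simp only [VF]
  rw [if_neg (by omega), if_neg (by omega), if_neg (by omega)]

theorem val_smalls : ((0 : Fin (k + 4)).val = 0) ∧ ((1 : Fin (k + 4)).val = 1) ∧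
    ((2 : Fin (k + 4)).val = 2) ∧ ((3 : Fin (k + 4)).val = 3) := by
  refine ⟨rfl, ?_, ?_, ?_⟩
  · have : (1 : Fin (k + 4)).val = 1 % (k + 4) := rfl
    rw [this, Nat.mod_eq_of_lt (by omega)]
  · have : (2 : Fin (k + 4)).val = 2 % (k + 4) := rfl
    rw [this, Nat.mod_eq_of_lt (by omega)]
  · have : (3 : Fin (k + 4)).val = 3 % (k + 4) := rfl
    rw [this, Nat.mod_eq_of_lt (by omega)]

theorem val_add_one (i : Fin (k + 4)) :
    (i + 1).val = if i.val = k + 3 then 0 else i.val + 1 := by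
  rw [Fin.val_add_one]
  by_cases hi : i = Fin.last (k + 3)
  · rw [if_pos hi, if_pos (by rw [hi]; rfl)]
  · rw [if_neg hi, if_neg (fun hh => hi (Fin.ext (by simpa using hh)))]

section PC2
variable {x m : Fin k → ℝ} (h : Pcond x m)
include h

theorem VFx_pos {j : Fin (k + 4)} (h0 : j.val ≠ 0) (h1 : j.val ≠ 1) : 0 < (VF x m j).1 := by
  rcases Nat.lt_or_ge j.val 4 with h4 | h4
  · have : j.val = 2 ∨ j.val = 3 := by omega
    rcases this with h2 | h2 <;> simp [VF, h2, QF, XF_zero] <;> norm_num [XF]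
  · rw [VF_val x m (by omega)]
    exact XF_pos h (by omega)

theorem VFx_lt_one {j : Fin (k + 4)} (h2 : j.val ≠ 2) (h3 : j.val ≠ 3) : (VF x m j).1 < 1 := by
  rcases Nat.lt_or_ge j.val 4 with h4 | h4
  · have : j.val = 0 ∨ j.val = 1 := by omega
    rcases this with h0 | h0 <;> simp [VF, h0]
  · rw [VF_val x m (by omega)]
    exact XF_lt_one h (by omega)

theorem VFy_pos {j : Fin (k + 4)} (h1 : j.val ≠ 1) (h2 : j.val ≠ 2) : 0 < (VF x m j).2 := by
  rcases Nat.lt_or_ge j.val 4 with h4 | h4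
  · have : j.val = 0 ∨ j.val = 3 := by omega
    rcases this with h0 | h0 <;> simp [VF, h0, QF, YF_zero] <;> norm_num [YF]
  · rw [VF_val x m (by omega)]
    have := YF_interior h (show 1 ≤ j.val - 3 by omega) (show j.val - 3 ≤ k by omega)
    simp only [QF]
    linarith

theorem hardDir : IsNormalizedConvexPolygon (VF x m) := by
  obtain ⟨v0, v1, v2, v3⟩ := val_smalls (k := k)
  have hVF0 : VF x m 0 = (0, 1) := by simp [VF, v0]
  have hVF1 : VF x m 1 = (0, 0) := by simp [VF, v1]
  have hVF2 : VF x m 2 = (1, 0) := by simp [VF, v2, Nat.mod_eq_of_lt (show 2 < k + 4 by omega)]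
  have hVF3 : VF x m 3 = (1, 1) := by rw [VF_val x m (by omega), v3, QF_zero]
  refine ⟨?_, hVF0, hVF1, hVF2, hVF3⟩
  intro i j hji hji1
  have hjiv : j.val ≠ i.val := fun hh => hji (Fin.ext hh)
  have hji1v : j.val ≠ (i + 1).val := fun hh => hji1 (Fin.ext hh)
  have hadd := val_add_one i
  rcases Nat.lt_or_ge i.val 3 with h3 | h3
  · have hadd' : (i + 1).val = i.val + 1 := by rw [hadd, if_neg (by omega)]
    rcases (by omega : i.val = 0 ∨ i.val = 1 ∨ i.val = 2) with h0 | h0 | h0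
    · have hi : VF x m i = (0, 1) := by rw [show i = 0 from Fin.ext (by rw [h0, v0]), hVF0]
      have hi1 : VF x m (i + 1) = (0, 0) := by
        rw [show i + 1 = 1 from Fin.ext (by rw [hadd', h0, v1]), hVF1]
      rw [hi, hi1]
      have := VFx_pos (j := j) h (by omega) (by rw [hadd', h0] at hji1v; omega)
      simp only [cross2, Prod.fst_sub, Prod.snd_sub]
      nlinarith
    · have hi : VF x m i = (0, 0) := by rw [show i = 1 from Fin.ext (by rw [h0, v1]), hVF1]
      have hi1 : VF x m (i + 1) = (1, 0) := by
        rw [show i + 1 = 2 from Fin.ext (by rw [hadd', h0, v2]), hVF2]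
      rw [hi, hi1]
      have := VFy_pos (j := j) h (by omega) (by rw [hadd', h0] at hji1v; omega)
      simp only [cross2, Prod.fst_sub, Prod.snd_sub]
      nlinarith
    · have hi : VF x m i = (1, 0) := by rw [show i = 2 from Fin.ext (by rw [h0, v2]), hVF2]
      have hi1 : VF x m (i + 1) = (1, 1) := by
        rw [show i + 1 = 3 from Fin.ext (by rw [hadd', h0, v3]), hVF3]
      rw [hi, hi1]
      have := VFx_lt_one (j := j) h (by omega) (by rw [hadd', h0] at hji1v; omega)
      simp only [cross2, Prod.fst_sub, Prod.snd_sub]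
      nlinarith
  · -- chain edge
    set a := i.val - 3 with hadef
    have ha : a ≤ k := by omega
    have hVi : VF x m i = QF x m a := VF_val x m h3
    have hVi1 : VF x m (i + 1) = QF x m (a + 1) := by
      by_cases htop : i.val = k + 3
      · have : (i + 1).val = 0 := by rw [hadd, if_pos htop]
        have e : VF x m (i + 1) = (0, 1) := by
          rw [show i + 1 = 0 from Fin.ext (by rw [this, v0]), hVF0]
        rw [e, show a + 1 = k + 1 by omega, QF_top]
      · have hv : (i + 1).val = i.val + 1 := by rw [hadd, if_neg htop]
        rw [VF_val x m (by omega), hv]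
        congr 1
        omega
    rw [hVi, hVi1]
    rcases Nat.lt_or_ge j.val 4 with hj4 | hj4
    · rcases (by omega : j.val = 0 ∨ j.val = 1 ∨ j.val = 2 ∨ j.val = 3) with hj | hj | hj | hj
      · have e : VF x m j = QF x m (k + 1) := by
          rw [show j = 0 from Fin.ext (by rw [hj, v0]), hVF0, QF_top]
        rw [e]
        refine chainCross h ha le_rfl (by omega) ?_
        intro hcontr
        have : i.val = k + 3 := by omega
        rw [hadd, if_pos this] at hji1v
        omega
      · have e : VF x m j = ((0:ℝ), (0:ℝ)) := by rw [show j = 1 from Fin.ext (by rw [hj, v1]), hVF1]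
        rw [e]
        exact Gv1 h ha
      · have e : VF x m j = ((1:ℝ), (0:ℝ)) := by rw [show j = 2 from Fin.ext (by rw [hj, v2]), hVF2]
        rw [e]
        exact Gv2 h ha
      · have e : VF x m j = QF x m 0 := by
          rw [show j = 3 from Fin.ext (by rw [hj, v3]), hVF3, QF_zero]
        rw [e]
        refine chainCross h ha (by omega) ?_ (by omega)
        intro hcontr
        have : i.val = 3 := by omega
        omega
    · have e : VF x m j = QF x m (j.val - 3) := VF_val x m (by omega)
      rw [e]
      refine chainCross h ha (by omega) (by omega) ?_
      intro hcontr
      by_cases htop : i.val = k + 3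
      · omega
      · have hv : (i + 1).val = i.val + 1 := by rw [hadd, if_neg htop]
        rw [hv] at hji1v
        omega

end PC2

noncomputable def xv (v : Fin (k + 4) → ℝ × ℝ) : Fin k → ℝ := fun j => (v ⟨j.val + 4, by omega⟩).1

noncomputable def mv (v : Fin (k + 4) → ℝ × ℝ) : Fin k → ℝ := fun j =>
  ((v ⟨j.val + 4, by omega⟩).2 - (v ⟨j.val + 3, by omega⟩).2) /
    ((v ⟨j.val + 4, by omega⟩).1 - (v ⟨j.val + 3, by omega⟩).1)

/-- chain points extracted from the vertex list, with wraparound `Wv (k+1) = v 0`. -/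
def Wv (v : Fin (k + 4) → ℝ × ℝ) : ℕ → ℝ × ℝ := fun c =>
  v ⟨(c + 3) % (k + 4), Nat.mod_lt _ (by omega)⟩

/-- the chain index as an element of `Fin (k+4)`. -/
def Ic (k : ℕ) (c : ℕ) : Fin (k + 4) := ⟨(c + 3) % (k + 4), Nat.mod_lt _ (by omega)⟩

theorem Wv_eq (v : Fin (k + 4) → ℝ × ℝ) {c : ℕ} (hc : c ≤ k) :
    Wv v c = v ⟨c + 3, by omega⟩ := by
  simp only [Wv]
  congr 1
  exact Fin.ext (by simp [Nat.mod_eq_of_lt (by omega : c + 3 < k + 4)])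

theorem Ic_val {c : ℕ} (hc : c ≤ k) : (Ic k c).val = c + 3 := by
  simp [Ic, Nat.mod_eq_of_lt (by omega : c + 3 < k + 4)]

theorem Ic_top_val : (Ic k (k + 1)).val = 0 := by
  simp [Ic, Nat.mod_self]

theorem Ic_succ {c : ℕ} (hc : c ≤ k) : Ic k c + 1 = Ic k (c + 1) := by
  refine Fin.ext ?_
  rw [val_add_one, Ic_val hc]
  rcases Nat.eq_or_lt_of_le hc with h1 | h1
  · rw [if_pos (by omega), h1, Ic_top_val]
  · rw [if_neg (by omega), Ic_val (by omega)]

section ED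
variable {v : Fin (k + 4) → ℝ × ℝ} (hv : IsNormalizedConvexPolygon v)
include hv

theorem fix0 : v 0 = (0, 1) := hv.2.1
theorem fix1 : v 1 = (0, 0) := hv.2.2.1
theorem fix2 : v 2 = (1, 0) := hv.2.2.2.1
theorem fix3 : v 3 = (1, 1) := hv.2.2.2.2

theorem e0 {j : Fin (k + 4)} (h0 : j.val ≠ 0) (h1 : j.val ≠ 1) : 0 < (v j).1 := by
  obtain ⟨v0, v1, v2, v3⟩ := val_smalls (k := k)
  have h01 : (0 : Fin (k + 4)) + 1 = 1 := by
    refine Fin.ext ?_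
    rw [val_add_one, v0, if_neg (by omega), v1]
  have := hv.1 0 j (fun hh => h0 (by rw [hh, v0])) (fun hh => h1 (by rw [hh, h01, v1]))
  rw [h01, fix0 hv, fix1 hv] at this
  simp only [cross2, Prod.fst_sub, Prod.snd_sub] at this
  nlinarith

theorem e1 {j : Fin (k + 4)} (h1 : j.val ≠ 1) (h2 : j.val ≠ 2) : 0 < (v j).2 := by
  obtain ⟨v0, v1, v2, v3⟩ := val_smalls (k := k)
  have h12 : (1 : Fin (k + 4)) + 1 = 2 := by
    refine Fin.ext ?_
    rw [val_add_one, v1, if_neg (by omega), v2]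
  have := hv.1 1 j (fun hh => h1 (by rw [hh, v1])) (fun hh => h2 (by rw [hh, h12, v2]))
  rw [h12, fix1 hv, fix2 hv] at this
  simp only [cross2, Prod.fst_sub, Prod.snd_sub] at this
  nlinarith

theorem e2 {j : Fin (k + 4)} (h2 : j.val ≠ 2) (h3 : j.val ≠ 3) : (v j).1 < 1 := by
  obtain ⟨v0, v1, v2, v3⟩ := val_smalls (k := k)
  have h23 : (2 : Fin (k + 4)) + 1 = 3 := by
    refine Fin.ext ?_
    rw [val_add_one, v2, if_neg (by omega), v3]
  have := hv.1 2 j (fun hh => h2 (by rw [hh, v2])) (fun hh => h3 (by rw [hh, h23, v3]))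
  rw [h23, fix2 hv, fix3 hv] at this
  simp only [cross2, Prod.fst_sub, Prod.snd_sub] at this
  nlinarith

theorem Wv_zero : Wv v 0 = (1, 1) := by
  rw [Wv_eq v (Nat.zero_le k)]
  obtain ⟨v0, v1, v2, v3⟩ := val_smalls (k := k)
  rw [show (⟨0 + 3, by omega⟩ : Fin (k + 4)) = 3 from Fin.ext (by rw [v3]), fix3 hv]

theorem Wv_top : Wv v (k + 1) = (0, 1) := by
  obtain ⟨v0, v1, v2, v3⟩ := val_smalls (k := k)
  have : (⟨(k + 1 + 3) % (k + 4), Nat.mod_lt _ (by omega)⟩ : Fin (k + 4)) = 0 :=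
    Fin.ext (by rw [v0]; simp [Nat.mod_self])
  rw [Wv, this, fix0 hv]

theorem crossW {c : ℕ} (hc : c ≤ k) {j : Fin (k + 4)} (hj : j.val ≠ c + 3)
    (hj1 : j ≠ Ic k c + 1) :
    0 < cross2 (Wv v (c + 1) - Wv v c) (v j - Wv v c) := by
  have := hv.1 (Ic k c) j (fun hh => hj (by rw [hh, Ic_val hc])) hj1
  rw [Ic_succ hc] at this
  exact this

theorem Dneg {c : ℕ} (hc : c ≤ k) : (Wv v (c + 1)).1 - (Wv v c).1 < 0 := by
  obtain ⟨v0, v1, v2, v3⟩ := val_smalls (k := k)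
  rcases Nat.eq_zero_or_pos c with rfl | hc1
  · have h1 : (Wv v 1).1 < 1 := by
      rcases Nat.eq_zero_or_pos k with rfl | hk
      · rw [show (1 : ℕ) = 0 + 1 from rfl, Wv_top hv]
        norm_num
      · rw [Wv_eq v hk]
        exact e2 hv (by show 1 + 3 ≠ 2; omega) (by show 1 + 3 ≠ 3; omega)
    have h0 : (Wv v 0).1 = 1 := by rw [Wv_zero hv]
    linarith
  · have hp0 : 0 < (Wv v c).1 := by
      rw [Wv_eq v hc]; exact e0 hv (by show c + 3 ≠ 0; omega) (by show c + 3 ≠ 1; omega)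
    have hp1 : (Wv v c).1 < 1 := by
      rw [Wv_eq v hc]; exact e2 hv (by show c + 3 ≠ 2; omega) (by show c + 3 ≠ 3; omega)
    have hq : 0 < (Wv v c).2 := by
      rw [Wv_eq v hc]; exact e1 hv (by show c + 3 ≠ 1; omega) (by show c + 3 ≠ 2; omega)
    have hi1v : (Ic k c + 1).val = (c + 1 + 3) % (k + 4) := by rw [Ic_succ hc]; rfl
    have hne : ∀ (t : ℕ) (ht0 : 0 < t) (ht : t < 3) (htk : t < k + 4), ((⟨t, htk⟩ : Fin (k + 4)) ≠ Ic k c + 1) := by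
      intro t ht0 ht htk hh
      have hvv0 := congrArg Fin.val hh
      rw [hi1v] at hvv0
      have hvv : t = (c + 1 + 3) % (k + 4) := hvv0
      rcases Nat.lt_or_ge (c + 1) (k + 1) with h' | h'
      · rw [Nat.mod_eq_of_lt (by omega)] at hvv; omega
      · have hck : c = k := by omega
        rw [hck, show k + 1 + 3 = k + 4 + 0 by ring, Nat.add_mod_left,
          Nat.zero_mod] at hvv
        omega
    have c1 : 0 < cross2 (Wv v (c + 1) - Wv v c) (v 1 - Wv v c) := by
      refine crossW hv hc (by rw [v1]; omega) ?_
      have := hne 1 (by omega) (by omega) (by omega)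
      rwa [show (⟨1, by omega⟩ : Fin (k + 4)) = 1 from Fin.ext (by rw [v1])] at this
    have c2 : 0 < cross2 (Wv v (c + 1) - Wv v c) (v 2 - Wv v c) := by
      refine crossW hv hc (by rw [v2]; omega) ?_
      have := hne 2 (by omega) (by omega) (by omega)
      rwa [show (⟨2, by omega⟩ : Fin (k + 4)) = 2 from Fin.ext (by rw [v2])] at this
    rw [fix1 hv] at c1
    rw [fix2 hv] at c2
    simp only [cross2, Prod.fst_sub, Prod.snd_sub] at c1 c2
    have huq : ((Wv v (c + 1)).1 - (Wv v c).1) * (Wv v c).2 < 0 := by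
      nlinarith [mul_pos (sub_pos.2 hp1) c1, mul_pos hp0 c2]
    by_contra hcon
    push_neg at hcon
    nlinarith [mul_nonneg hcon hq.le]

theorem scrossW {c : ℕ} (hc : c + 1 ≤ k) :
    0 < cross2 (Wv v (c + 1) - Wv v c) (Wv v (c + 2) - Wv v (c + 1)) := by
  have hj : 0 < cross2 (Wv v (c + 1) - Wv v c) (v (Ic k (c + 2)) - Wv v c) := by
    refine crossW hv (by omega) ?_ ?_
    · show (c + 2 + 3) % (k + 4) ≠ c + 3
      rcases Nat.lt_or_ge (c + 2) (k + 1) with h' | h'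
      · rw [Nat.mod_eq_of_lt (by omega)]; omega
      · have : c + 2 + 3 = k + 4 + 0 := by omega
        rw [this, Nat.add_mod_left, Nat.zero_mod]
        omega
    · rw [Ic_succ (by omega)]
      intro hh
      have hvv := congrArg Fin.val hh
      simp only [Ic] at hvv
      rw [Nat.mod_eq_of_lt (show c + 1 + 3 < k + 4 by omega)] at hvv
      rcases Nat.lt_or_ge (c + 2) (k + 1) with h' | h'
      · rw [Nat.mod_eq_of_lt (by omega)] at hvv; omega
      · have : c + 2 + 3 = k + 4 + 0 := by omega
        rw [this, Nat.add_mod_left, Nat.zero_mod] at hvv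
        omega
  have hj' : 0 < cross2 (Wv v (c + 1) - Wv v c) (Wv v (c + 2) - Wv v c) := hj
  have split : Wv v (c + 2) - Wv v c =
      (Wv v (c + 2) - Wv v (c + 1)) + (Wv v (c + 1) - Wv v c) := by
    rw [sub_add_sub_cancel]
  rw [split] at hj'
  have expand : cross2 (Wv v (c + 1) - Wv v c)
      ((Wv v (c + 2) - Wv v (c + 1)) + (Wv v (c + 1) - Wv v c)) =
      cross2 (Wv v (c + 1) - Wv v c) (Wv v (c + 2) - Wv v (c + 1)) := by
    simp only [cross2, Prod.fst_add, Prod.snd_add, Prod.fst_sub, Prod.snd_sub]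
    ring
  rwa [expand] at hj'

theorem hXW : ∀ n ≤ k + 1, XF (xv v) n = (Wv v n).1 := by
  intro n hn
  rcases Nat.eq_zero_or_pos n with rfl | hn0
  · rw [XF_zero, Wv_zero hv]
  rcases Nat.eq_or_lt_of_le hn with h1 | h1
  · rw [h1, XF_top (xv v) le_rfl, Wv_top hv]
  · have hnk : n ≤ k := by omega
    simp only [XF]
    rw [if_neg (by omega), dif_pos (show n - 1 < k by omega), Wv_eq v hnk]
    show (v ⟨n - 1 + 4, by omega⟩).1 = (v ⟨n + 3, by omega⟩).1
    congr 2
    exact Fin.ext (by simp only []; omega)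

theorem mvW {n : ℕ} (hn : n < k) : mmF (mv v) n =
    ((Wv v (n + 1)).2 - (Wv v n).2) / ((Wv v (n + 1)).1 - (Wv v n).1) := by
  simp only [mmF]
  rw [dif_pos hn]
  rw [Wv_eq v (show n + 1 ≤ k by omega), Wv_eq v (show n ≤ k by omega)]
  show ((v ⟨n + 4, by omega⟩).2 - (v ⟨n + 3, by omega⟩).2) /
    ((v ⟨n + 4, by omega⟩).1 - (v ⟨n + 3, by omega⟩).1) = _
  congr 3 <;> exact congrArg v (Fin.ext (by simp only []; omega))

theorem hYW : ∀ n, n ≤ k → YF (xv v) (mv v) n = (Wv v n).2 := by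
  intro n
  induction n with
  | zero => intro _; rw [YF_zero, Wv_zero hv]
  | succ n ih =>
    intro hn
    have hYs : YF (xv v) (mv v) (n + 1) = YF (xv v) (mv v) n +
        mmF (mv v) n * (XF (xv v) (n + 1) - XF (xv v) n) := by
      simp only [YF]
      rw [if_pos (by omega : n + 1 ≤ k), if_pos (by omega : n ≤ k), Finset.sum_range_succ]
      ring
    have hd := Dneg hv (show n ≤ k by omega)
    rw [hYs, ih (by omega), mvW hv (by omega), hXW hv (n + 1) (by omega),
      hXW hv n (by omega), div_mul_cancel₀ _ (by linarith : (Wv v (n + 1)).1 - (Wv v n).1 ≠ 0)]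
    ring

theorem hsW : ∀ n ≤ k, sF (xv v) (mv v) n =
    ((Wv v (n + 1)).2 - (Wv v n).2) / ((Wv v (n + 1)).1 - (Wv v n).1) := by
  intro n hn
  rcases Nat.lt_or_ge n k with h' | h'
  · simp only [sF]
    rw [if_pos h']
    exact mvW hv h'
  · have hnk : n = k := by omega
    subst hnk
    simp only [sF]
    rw [if_neg (lt_irrefl n), hYW hv n le_rfl, hXW hv n (by omega),
      show n + 1 = n + 1 from rfl, Wv_top hv]
    show ((Wv v n).2 - 1) / (Wv v n).1 = (1 - (Wv v n).2) / (0 - (Wv v n).1)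
    rw [show (1:ℝ) - (Wv v n).2 = -((Wv v n).2 - 1) by ring,
      show (0:ℝ) - (Wv v n).1 = -((Wv v n).1) by ring, neg_div_neg_eq]

theorem easyDir : Pcond (xv v) (mv v) := by
  constructor
  · intro n hn
    rw [hXW hv (n + 1) (by omega), hXW hv n (by omega)]
    have := Dneg hv hn
    linarith
  · intro n hn
    rw [hsW hv n (by omega), hsW hv (n + 1) hn]
    have hd1 := Dneg hv (show n ≤ k by omega)
    have hd2 := Dneg hv (show n + 1 ≤ k by omega)
    have hcr := scrossW hv hn
    simp only [cross2, Prod.fst_sub, Prod.snd_sub] at hcr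
    have h1 : (Wv v (n + 1)).1 - (Wv v n).1 ≠ 0 := by linarith
    have h2 : (Wv v (n + 1 + 1)).1 - (Wv v (n + 1)).1 ≠ 0 := by linarith
    have key : ((Wv v (n + 1 + 1)).2 - (Wv v (n + 1)).2) /
          ((Wv v (n + 1 + 1)).1 - (Wv v (n + 1)).1) -
        ((Wv v (n + 1)).2 - (Wv v n).2) / ((Wv v (n + 1)).1 - (Wv v n).1) =
        (((Wv v (n + 1)).1 - (Wv v n).1) * ((Wv v (n + 2)).2 - (Wv v (n + 1)).2) -
          ((Wv v (n + 1)).2 - (Wv v n).2) * ((Wv v (n + 2)).1 - (Wv v (n + 1)).1)) /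
          (((Wv v (n + 1)).1 - (Wv v n).1) * ((Wv v (n + 1 + 1)).1 - (Wv v (n + 1)).1)) := by
      rw [show n + 2 = n + 1 + 1 from rfl]
      field_simp
    have hpos : 0 < (((Wv v (n + 1)).1 - (Wv v n).1) * ((Wv v (n + 2)).2 - (Wv v (n + 1)).2) -
          ((Wv v (n + 1)).2 - (Wv v n).2) * ((Wv v (n + 2)).1 - (Wv v (n + 1)).1)) /
          (((Wv v (n + 1)).1 - (Wv v n).1) * ((Wv v (n + 1 + 1)).1 - (Wv v (n + 1)).1)) :=
      div_pos hcr (mul_pos_of_neg_of_neg hd1 hd2)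
    linarith [key ▸ hpos]

theorem left_inv' : VF (xv v) (mv v) = v := by
  obtain ⟨v0, v1, v2, v3⟩ := val_smalls (k := k)
  funext i
  rcases Nat.lt_or_ge i.val 3 with h3 | h3
  · rcases (by omega : i.val = 0 ∨ i.val = 1 ∨ i.val = 2) with h0 | h0 | h0
    · rw [show i = 0 from Fin.ext (by rw [v0, h0]), fix0 hv]
      simp [VF, v0]
    · rw [show i = 1 from Fin.ext (by rw [v1, h0]), fix1 hv]
      simp [VF, v1]
    · rw [show i = 2 from Fin.ext (by rw [v2, h0]), fix2 hv]
      simp [VF, v2, Nat.mod_eq_of_lt (show 2 < k + 4 by omega)]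
  · rw [VF_val _ _ h3]
    have hc : i.val - 3 ≤ k := by omega
    have : QF (xv v) (mv v) (i.val - 3) = Wv v (i.val - 3) := by
      have e1 := hXW hv (i.val - 3) (by omega)
      have e2 := hYW hv (i.val - 3) hc
      exact Prod.ext e1 e2
    rw [this, Wv_eq v hc]
    congr 1
    exact Fin.ext (by simp only []; omega)

end ED

section RI
variable {x m : Fin k → ℝ} (h : Pcond x m)
include h

theorem right_inv_x : xv (VF x m) = x := by
  funext j
  show (VF x m ⟨j.val + 4, by omega⟩).1 = x j
  rw [VF_val x m (by show 3 ≤ j.val + 4; omega)]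
  show XF x (j.val + 4 - 3) = x j
  simp only [XF]
  rw [if_neg (by omega), dif_pos (show j.val + 4 - 3 - 1 < k by omega)]
  congr 1
  try exact Fin.ext (by simp only []; omega)

theorem right_inv_m : mv (VF x m) = m := by
  funext j
  have hjk : j.val ≤ k := by omega
  show ((VF x m ⟨j.val + 4, by omega⟩).2 - (VF x m ⟨j.val + 3, by omega⟩).2) /
      ((VF x m ⟨j.val + 4, by omega⟩).1 - (VF x m ⟨j.val + 3, by omega⟩).1) = m j
  rw [VF_val x m (by show 3 ≤ j.val + 4; omega), VF_val x m (by show 3 ≤ j.val + 3; omega)]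
  show (YF x m (j.val + 4 - 3) - YF x m (j.val + 3 - 3)) /
      (XF x (j.val + 4 - 3) - XF x (j.val + 3 - 3)) = m j
  rw [show j.val + 4 - 3 = j.val + 1 by omega, show j.val + 3 - 3 = j.val by omega,
    YF_succ_sub h hjk, mul_div_assoc, div_self (by have := DF_neg h hjk; linarith), mul_one]
  simp [sF, mmF, j.isLt]

end RI

theorem cont_mmF {α : Type*} [TopologicalSpace α] {f : α → Fin k → ℝ} (hf : Continuous f)
    (n : ℕ) : Continuous fun q => mmF (f q) n := by
  unfold mmF
  by_cases h : n < k
  · simp only [dif_pos h]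
    exact (continuous_apply _).comp hf
  · simp only [dif_neg h]
    exact continuous_const

theorem cont_XF {α : Type*} [TopologicalSpace α] {f : α → Fin k → ℝ} (hf : Continuous f)
    (n : ℕ) : Continuous fun q => XF (f q) n := by
  unfold XF
  by_cases h0 : n = 0
  · simp only [if_pos h0]; exact continuous_const
  · simp only [if_neg h0]
    by_cases h : n - 1 < k
    · simp only [dif_pos h]
      exact (continuous_apply _).comp hf
    · simp only [dif_neg h]
      exact continuous_const

theorem cont_YF {α : Type*} [TopologicalSpace α] {f : α → Fin k → ℝ} {g : α → Fin k → ℝ}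
    (hf : Continuous f) (hg : Continuous g) (n : ℕ) :
    Continuous fun q => YF (f q) (g q) n := by
  unfold YF
  by_cases h : n ≤ k
  · simp only [if_pos h]
    refine continuous_const.add (continuous_finset_sum _ fun l _ => ?_)
    exact (cont_mmF hg l).mul ((cont_XF hf (l + 1)).sub (cont_XF hf l))
  · simp only [if_neg h]
    exact continuous_const

theorem den_ne {v : Fin (k + 4) → ℝ × ℝ} (hv : IsNormalizedConvexPolygon v) (j : Fin k) :
    (v ⟨j.val + 4, by omega⟩).1 - (v ⟨j.val + 3, by omega⟩).1 ≠ 0 := by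
  have := Dneg hv (show j.val ≤ k by omega)
  rw [Wv_eq v (show j.val + 1 ≤ k by omega), Wv_eq v (show j.val ≤ k by omega)] at this
  have e : (⟨j.val + 1 + 3, by omega⟩ : Fin (k + 4)) = ⟨j.val + 4, by omega⟩ := rfl
  rw [e] at this
  linarith

/-- The polygon space is homeomorphic to the parameter space. -/
noncomputable def homeoSP :
    {v : Fin (k + 4) → ℝ × ℝ // IsNormalizedConvexPolygon v} ≃ₜ
      {q : (Fin k → ℝ) × (Fin k → ℝ) // Pcond q.1 q.2} where
  toFun p := ⟨(xv p.1, mv p.1), easyDir p.2⟩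
  invFun q := ⟨VF q.1.1 q.1.2, hardDir q.2⟩
  left_inv p := Subtype.ext (left_inv' p.2)
  right_inv q := Subtype.ext (Prod.ext (right_inv_x q.2) (right_inv_m q.2))
  continuous_toFun := by
    apply Continuous.subtype_mk
    refine Continuous.prodMk ?_ ?_
    · refine continuous_pi fun j => ?_
      exact ((continuous_apply _).comp continuous_subtype_val).fst
    · refine continuous_pi fun j => ?_
      refine Continuous.div ?_ ?_ ?_
      · exact (((continuous_apply _).comp continuous_subtype_val).snd).sub
          (((continuous_apply _).comp continuous_subtype_val).snd)
      · exact (((continuous_apply _).comp continuous_subtype_val).fst).sub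
          (((continuous_apply _).comp continuous_subtype_val).fst)
      · intro p
        exact den_ne p.2 j
  continuous_invFun := by
    apply Continuous.subtype_mk
    refine continuous_pi fun i => ?_
    unfold VF
    by_cases h0 : i.val = 0
    · simp only [if_pos h0]; exact continuous_const
    · simp only [if_neg h0]
      by_cases h1 : i.val = 1
      · simp only [if_pos h1]; exact continuous_const
      · simp only [if_neg h1]
        by_cases h2 : i.val = 2
        · simp only [if_pos h2]; exact continuous_const
        · simp only [if_neg h2]
          unfold QF
          exact Continuous.prodMk
            (cont_XF (continuous_fst.comp continuous_subtype_val) _)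
            (cont_YF (continuous_fst.comp continuous_subtype_val)
              (continuous_snd.comp continuous_subtype_val) _)

noncomputable def aF (x : Fin k → ℝ) : Fin k → ℝ := fun j =>
  Real.log ((XF x j.val - XF x (j.val + 1)) / XF x (j.val + 1))

noncomputable def sigF (x m : Fin k → ℝ) : ℝ :=
  mmF m 0 + ∑ l ∈ Finset.range (k - 1), XF x (l + 1) * (mmF m (l + 1) - mmF m l)

noncomputable def bF (x m : Fin k → ℝ) : Fin k → ℝ := fun j =>
  if j.val + 1 < k then Real.log (mmF m (j.val + 1) - mmF m j.val)
  else Real.log (-sigF x m)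

noncomputable def XiF (a : Fin k → ℝ) : ℕ → ℝ
  | 0 => 1
  | n + 1 => XiF a n / (1 + Real.exp (mmF a n))

noncomputable def MF (a b : Fin k → ℝ) : ℕ → ℝ
  | 0 => -Real.exp (mmF b (k - 1)) -
      ∑ l ∈ Finset.range (k - 1), XiF a (l + 1) * Real.exp (mmF b l)
  | n + 1 => MF a b n + Real.exp (mmF b n)

noncomputable def xinv (a : Fin k → ℝ) : Fin k → ℝ := fun j => XiF a (j.val + 1)
noncomputable def minv (a b : Fin k → ℝ) : Fin k → ℝ := fun j => MF a b j.val

theorem XiF_pos (a : Fin k → ℝ) : ∀ n, 0 < XiF a n := by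
  intro n
  induction n with
  | zero => norm_num [XiF]
  | succ n ih =>
    rw [XiF]
    exact div_pos ih (by positivity)

theorem XiF_lt (a : Fin k → ℝ) (n : ℕ) : XiF a (n + 1) < XiF a n := by
  rw [XiF]
  refine div_lt_self (XiF_pos a n) ?_
  have := Real.exp_pos (mmF a n)
  linarith

/-- the key Abel-summation identity for `sigF`. -/
theorem sig_id (x m : Fin k → ℝ) : ∀ n, n + 1 ≤ k →
    mmF m n * XF x (n + 1) - (YF x m (n + 1) - 1) =
      mmF m 0 + ∑ l ∈ Finset.range n, XF x (l + 1) * (mmF m (l + 1) - mmF m l) := by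
  intro n
  induction n with
  | zero =>
    intro h1
    simp only [YF, if_pos h1, Finset.range_one, Finset.sum_range_succ, Finset.range_zero,
      Finset.sum_empty, Finset.sum_range_one, XF_zero]
    ring
  | succ n ih =>
    intro h1
    have ihh := ih (by omega)
    have hY : YF x m (n + 1 + 1) - YF x m (n + 1) =
        mmF m (n + 1) * (XF x (n + 1 + 1) - XF x (n + 1)) := by
      simp only [YF, if_pos (show n + 1 + 1 ≤ k by omega), if_pos (show n + 1 ≤ k by omega),
        Finset.sum_range_succ]
      ring
    rw [Finset.sum_range_succ]
    have : mmF m (n + 1) * XF x (n + 1 + 1) - (YF x m (n + 1 + 1) - 1) =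
        (mmF m n * XF x (n + 1) - (YF x m (n + 1) - 1)) +
          XF x (n + 1) * (mmF m (n + 1) - mmF m n) := by
      have := hY
      nlinarith [hY]
    rw [this, ihh]
    ring

theorem sigF_eq (x m : Fin k → ℝ) (hk : 1 ≤ k) :
    sigF x m = mmF m (k - 1) * XF x k - (YF x m k - 1) := by
  have := sig_id x m (k - 1) (by omega)
  rw [show k - 1 + 1 = k by omega] at this
  rw [sigF, ← this]

section PE
variable {x m : Fin k → ℝ} (h : Pcond x m)
include h

theorem ratio_pos (j : Fin k) :
    0 < (XF x j.val - XF x (j.val + 1)) / XF x (j.val + 1) := by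
  refine div_pos ?_ (XF_pos h (by omega))
  have := h.1 j.val (by omega)
  linarith

theorem diff_pos {n : ℕ} (hn : n + 1 < k) : 0 < mmF m (n + 1) - mmF m n := by
  have := h.2 n (by omega)
  simp only [sF, if_pos (show n < k by omega), if_pos hn] at this
  linarith

theorem sigF_neg (hk : 1 ≤ k) : sigF x m < 0 := by
  have hs := h.2 (k - 1) (by omega)
  rw [show k - 1 + 1 = k by omega] at hs
  simp only [sF, if_pos (show k - 1 < k by omega), if_neg (lt_irrefl k)] at hs
  have hXk := XF_pos h (le_refl k)
  rw [lt_div_iff₀ hXk] at hs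
  rw [sigF_eq x m hk]
  linarith

theorem XiF_aF : ∀ n, n ≤ k → XiF (aF x) n = XF x n := by
  intro n
  induction n with
  | zero => intro _; rw [XF_zero]; rfl
  | succ n ih =>
    intro hn
    have hlt : n < k := by omega
    have h1 : 0 < XF x (n + 1) := XF_pos h hn
    have h2 : 0 < XF x n := XF_pos h (by omega)
    have e : mmF (aF x) n = Real.log ((XF x n - XF x (n + 1)) / XF x (n + 1)) := by
      simp only [mmF, dif_pos hlt, aF]
    rw [XiF, ih (by omega), e, Real.exp_log (ratio_pos h ⟨n, hlt⟩)]
    rw [div_eq_iff]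
    · field_simp
      ring
    · have hd := h.1 n (by omega)
      have : 0 < 1 + (XF x n - XF x (n + 1)) / XF x (n + 1) := by
        have := ratio_pos h ⟨n, hlt⟩
        linarith
      linarith

theorem MF_aFbF : ∀ n, n < k → MF (aF x) (bF x m) n = mmF m n := by
  intro n
  induction n with
  | zero =>
    intro h0
    have hbtop : mmF (bF x m) (k - 1) = Real.log (-sigF x m) := by
      simp only [mmF, dif_pos (show k - 1 < k by omega), bF]
      rw [if_neg (by omega)]
    have hexp : Real.exp (mmF (bF x m) (k - 1)) = -sigF x m := by
      rw [hbtop, Real.exp_log (by have := sigF_neg h (by omega); linarith)]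
    rw [MF, hexp]
    have hsum : ∑ l ∈ Finset.range (k - 1), XiF (aF x) (l + 1) * Real.exp (mmF (bF x m) l) =
        ∑ l ∈ Finset.range (k - 1), XF x (l + 1) * (mmF m (l + 1) - mmF m l) := by
      refine Finset.sum_congr rfl fun l hl => ?_
      rw [Finset.mem_range] at hl
      have hbl : mmF (bF x m) l = Real.log (mmF m (l + 1) - mmF m l) := by
        simp only [mmF, dif_pos (show l < k by omega), bF]
        rw [if_pos (by omega)]
      rw [hbl, Real.exp_log (diff_pos h (by omega)), XiF_aF h (l + 1) (by omega)]
    rw [hsum]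
    have := sigF (x := x) (m := m)
    simp only [sigF]
    ring_nf
  | succ n ih =>
    intro hn
    have hbl : mmF (bF x m) n = Real.log (mmF m (n + 1) - mmF m n) := by
      simp only [mmF, dif_pos (show n < k by omega), bF]
      rw [if_pos (by omega)]
    rw [MF, ih (by omega), hbl, Real.exp_log (diff_pos h hn)]
    ring

end PE

theorem XF_xinv (a : Fin k → ℝ) : ∀ n, n ≤ k → XF (xinv a) n = XiF a n := by
  intro n hn
  rcases Nat.eq_zero_or_pos n with rfl | hn0
  · rw [XF_zero]; rfl
  · simp only [XF]
    rw [if_neg (by omega), dif_pos (show n - 1 < k by omega)]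
    show XiF a (n - 1 + 1) = XiF a n
    congr 1
    omega

theorem mmF_minv (a b : Fin k → ℝ) {n : ℕ} (hn : n < k) : mmF (minv a b) n = MF a b n := by
  simp only [mmF, dif_pos hn]
  rfl

theorem sig_inv (a b : Fin k → ℝ) (hk : 1 ≤ k) :
    sigF (xinv a) (minv a b) = -Real.exp (mmF b (k - 1)) := by
  simp only [sigF]
  rw [mmF_minv a b (show 0 < k by omega)]
  have hsum : ∑ l ∈ Finset.range (k - 1), XF (xinv a) (l + 1) *
      (mmF (minv a b) (l + 1) - mmF (minv a b) l) =
      ∑ l ∈ Finset.range (k - 1), XiF a (l + 1) * Real.exp (mmF b l) := by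
    refine Finset.sum_congr rfl fun l hl => ?_
    rw [Finset.mem_range] at hl
    rw [XF_xinv a (l + 1) (by omega), mmF_minv a b (show l + 1 < k by omega),
      mmF_minv a b (show l < k by omega), MF]
    ring
  rw [hsum, MF]
  ring

theorem Pcond_inv (a b : Fin k → ℝ) : Pcond (xinv a) (minv a b) := by
  constructor
  · intro n hn
    rcases Nat.lt_or_ge n k with h' | h'
    · rw [XF_xinv a (n + 1) (by omega), XF_xinv a n (by omega)]
      exact XiF_lt a n
    · have hnk : n = k := by omega
      subst hnk
      rw [XF_top (xinv a) le_rfl, XF_xinv a n le_rfl]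
      exact XiF_pos a n
  · intro n hn
    rcases Nat.lt_or_ge (n + 1) k with h' | h'
    · simp only [sF, if_pos (show n < k by omega), if_pos h']
      rw [mmF_minv a b (show n < k by omega), mmF_minv a b h', MF]
      have := Real.exp_pos (mmF b n)
      linarith
    · have hk1 : n + 1 = k := by omega
      simp only [sF, if_pos (show n < k by omega), if_neg (show ¬ n + 1 < k by omega)]
      have hXk : 0 < XF (xinv a) k := by
        rw [XF_xinv a k le_rfl]; exact XiF_pos a k
      rw [lt_div_iff₀ hXk]
      have hsig := sig_inv a b (by omega)
      rw [sigF_eq (xinv a) (minv a b) (by omega)] at hsig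
      have hexp := Real.exp_pos (mmF b (k - 1))
      rw [mmF_minv a b (show n < k by omega), show n = k - 1 by omega]
      rw [← mmF_minv a b (show k - 1 < k by omega)]
      linarith

theorem ainv_eq (a b : Fin k → ℝ) : aF (xinv a) = a := by
  funext j
  simp only [aF]
  rw [XF_xinv a j.val (by omega), XF_xinv a (j.val + 1) (by omega)]
  have key : (XiF a j.val - XiF a (j.val + 1)) / XiF a (j.val + 1) =
      Real.exp (mmF a j.val) := by
    rw [XiF]
    have h1 := (XiF_pos a j.val).ne'
    have h2 := Real.exp_pos (mmF a j.val)
    field_simp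
    ring
  rw [key, Real.log_exp]
  simp only [mmF, dif_pos j.isLt, Fin.eta]

theorem binv_eq (a b : Fin k → ℝ) : bF (xinv a) (minv a b) = b := by
  funext j
  simp only [bF]
  by_cases hj : j.val + 1 < k
  · rw [if_pos hj, mmF_minv a b hj, mmF_minv a b (show j.val < k by omega), MF,
      add_sub_cancel_left, Real.log_exp]
    simp only [mmF, dif_pos j.isLt, Fin.eta]
  · rw [if_neg hj, sig_inv a b (by omega), neg_neg, Real.log_exp]
    have : k - 1 = j.val := by omega
    rw [this]
    simp only [mmF, dif_pos j.isLt, Fin.eta]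

theorem xinv_eq {x m : Fin k → ℝ} (h : Pcond x m) : xinv (aF x) = x := by
  funext j
  show XiF (aF x) (j.val + 1) = x j
  rw [XiF_aF h (j.val + 1) (by omega)]
  simp only [XF]
  rw [if_neg (by omega), dif_pos (show j.val + 1 - 1 < k by omega)]
  congr 1
  try exact Fin.ext (by simp only []; omega)

theorem minv_eq {x m : Fin k → ℝ} (h : Pcond x m) : minv (aF x) (bF x m) = m := by
  funext j
  show MF (aF x) (bF x m) j.val = m j
  rw [MF_aFbF h j.val j.isLt]
  simp only [mmF, dif_pos j.isLt, Fin.eta]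

theorem cont_XiF : ∀ n, Continuous fun (a : Fin k → ℝ) => XiF a n := by
  intro n
  induction n with
  | zero => exact continuous_const
  | succ n ih =>
    refine Continuous.div ih ?_ ?_
    · exact continuous_const.add (Real.continuous_exp.comp (cont_mmF continuous_id n))
    · intro a
      have := Real.exp_pos (mmF a n)
      positivity

theorem cont_MF : ∀ n, Continuous fun (p : (Fin k → ℝ) × (Fin k → ℝ)) => MF p.1 p.2 n := by
  intro n
  induction n with
  | zero =>
    simp only [MF]
    refine Continuous.sub ?_ ?_
    · exact (Real.continuous_exp.comp (cont_mmF continuous_snd (k - 1))).neg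
    · refine continuous_finset_sum _ fun l _ => ?_
      exact ((cont_XiF (l + 1)).comp continuous_fst).mul
        (Real.continuous_exp.comp (cont_mmF continuous_snd l))
  | succ n ih =>
    simp only [MF]
    exact ih.add (Real.continuous_exp.comp (cont_mmF continuous_snd n))

/-- The parameter space is homeomorphic to the full euclidean product. -/
noncomputable def homeoPE :
    {q : (Fin k → ℝ) × (Fin k → ℝ) // Pcond q.1 q.2} ≃ₜ
      ((Fin k → ℝ) × (Fin k → ℝ)) where
  toFun q := (aF q.1.1, bF q.1.1 q.1.2)
  invFun p := ⟨(xinv p.1, minv p.1 p.2), Pcond_inv p.1 p.2⟩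
  left_inv q := Subtype.ext (Prod.ext (xinv_eq q.2) (minv_eq q.2))
  right_inv p := Prod.ext (ainv_eq p.1 p.2) (binv_eq p.1 p.2)
  continuous_toFun := by
    refine Continuous.prodMk ?_ ?_
    · refine continuous_pi fun j => ?_
      have hr : Continuous fun (q : {q : (Fin k → ℝ) × (Fin k → ℝ) // Pcond q.1 q.2}) =>
          (XF q.1.1 j.val - XF q.1.1 (j.val + 1)) / XF q.1.1 (j.val + 1) := by
        refine Continuous.div ?_ ?_ ?_
        · exact (cont_XF (continuous_fst.comp continuous_subtype_val) j.val).sub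
            (cont_XF (continuous_fst.comp continuous_subtype_val) (j.val + 1))
        · exact cont_XF (continuous_fst.comp continuous_subtype_val) (j.val + 1)
        · exact fun q => (XF_pos q.2 (by omega)).ne'
      exact Real.continuousOn_log.comp_continuous hr
        (fun q => Set.mem_compl_singleton_iff.2 (ratio_pos q.2 j).ne')
    · refine continuous_pi fun j => ?_
      by_cases hj : j.val + 1 < k
      · simp only [bF, if_pos hj]
        have hr : Continuous fun (q : {q : (Fin k → ℝ) × (Fin k → ℝ) // Pcond q.1 q.2}) =>
            mmF q.1.2 (j.val + 1) - mmF q.1.2 j.val :=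
          (cont_mmF (continuous_snd.comp continuous_subtype_val) (j.val + 1)).sub
            (cont_mmF (continuous_snd.comp continuous_subtype_val) j.val)
        exact Real.continuousOn_log.comp_continuous hr
          (fun q => Set.mem_compl_singleton_iff.2 (diff_pos q.2 hj).ne')
      · simp only [bF, if_neg hj]
        have hr : Continuous fun (q : {q : (Fin k → ℝ) × (Fin k → ℝ) // Pcond q.1 q.2}) =>
            -sigF q.1.1 q.1.2 := by
          refine Continuous.neg ?_
          refine Continuous.add (cont_mmF (continuous_snd.comp continuous_subtype_val) 0) ?_
          refine continuous_finset_sum _ fun l _ => ?_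
          exact (cont_XF (continuous_fst.comp continuous_subtype_val) (l + 1)).mul
            ((cont_mmF (continuous_snd.comp continuous_subtype_val) (l + 1)).sub
              (cont_mmF (continuous_snd.comp continuous_subtype_val) l))
        refine Real.continuousOn_log.comp_continuous hr fun q => ?_
        refine Set.mem_compl_singleton_iff.2 ?_
        have := sigF_neg q.2 (show 1 ≤ k by omega)
        intro hcon
        rw [neg_eq_zero] at hcon
        exact absurd hcon (by linarith)
  continuous_invFun := by
    apply Continuous.subtype_mk
    refine Continuous.prodMk ?_ ?_
    · exact continuous_pi fun j => (cont_XiF (j.val + 1)).comp continuous_fst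
    · exact continuous_pi fun j => cont_MF j.val

end NCP

/-- The space of normalized convex `(k+4)`-gons in the projective plane is homeomorphic to
`ℝ^{2(k+4)-8} = ℝ^{2k}`. -/
theorem normalized_polygon_space_homeomorphic_euclidean (k : ℕ) :
    Nonempty ({v : Fin (k + 4) → ℝ × ℝ // IsNormalizedConvexPolygon v} ≃ₜ
      (Fin (2 * k) → ℝ)) := by
  refine ⟨NCP.homeoSP.trans (NCP.homeoPE.trans ?_)⟩
  exact (Homeomorph.sumArrowHomeomorphProdArrow).symm.trans
    ((Homeomorph.piCongrLeft (Y := fun _ => ℝ) finSumFinEquiv).trans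
      (Homeomorph.piCongrLeft (Y := fun _ => ℝ) (finCongr (by ring))))
end

section
/- If a sequence of compact convex subsets of ℝ^N converges in the Hausdorff metric to a compact convex set K, then every extreme point of K is a limit of extreme points of the sets in the sequence. -/
open Filter Metric Set

/-- Convex hull of a compact set in a finite-dimensional Euclidean space is compact. -/
lemma isCompact_convexHull_aux {N : ℕ} {s : Set (EuclideanSpace ℝ (Fin N))}
    (hs : IsCompact s) : IsCompact (convexHull ℝ s) := by
  rcases s.eq_empty_or_nonempty with rfl | ⟨s₀, hs₀⟩
  · simp
  set n := N + 1 with hn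
  set f : (Fin n → ℝ) × (Fin n → EuclideanSpace ℝ (Fin N)) → EuclideanSpace ℝ (Fin N) :=
    fun p => ∑ i, p.1 i • p.2 i with hfdef
  have hT : IsCompact ((stdSimplex ℝ (Fin n)) ×ˢ (Set.univ.pi fun _ : Fin n => s)) :=
    (isCompact_stdSimplex (𝕜 := ℝ) (ι := Fin n)).prod (isCompact_univ_pi fun _ => hs)
  have hf : Continuous f := by
    apply continuous_finset_sum
    intro i _
    exact ((continuous_apply i).comp continuous_fst).smul
      ((continuous_apply i).comp continuous_snd)
  have himg : f '' ((stdSimplex ℝ (Fin n)) ×ˢ (Set.univ.pi fun _ : Fin n => s)) = convexHull ℝ s := by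
    apply Set.Subset.antisymm
    · rintro _ ⟨⟨w, z⟩, ⟨hw, hz⟩, rfl⟩
      exact (convex_convexHull ℝ s).sum_mem (fun i _ => hw.1 i) hw.2
        fun i _ => subset_convexHull ℝ s (hz i (Set.mem_univ i))
    · intro X hX
      obtain ⟨ι, hι, z, w, hzs, hai, hwpos, hwsum, hXeq⟩ :=
        eq_pos_convex_span_of_mem_convexHull hX
      have hcard : Fintype.card ι ≤ n := by
        calc Fintype.card ι ≤ Module.finrank ℝ (vectorSpan ℝ (Set.range z)) + 1 :=
              hai.card_le_finrank_succ
        _ ≤ Module.finrank ℝ (EuclideanSpace ℝ (Fin N)) + 1 :=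
              add_le_add_left (Submodule.finrank_le _) 1
        _ = n := by rw [finrank_euclideanSpace_fin]
      obtain ⟨e⟩ : Nonempty (ι ↪ Fin n) := by
        rwa [Function.Embedding.nonempty_iff_card_le, Fintype.card_fin]
      classical
      set w' : Fin n → ℝ := Function.extend e w (fun _ => 0) with hw'
      set z' : Fin n → EuclideanSpace ℝ (Fin N) := Function.extend e z (fun _ => s₀) with hz'
      have hw'e : ∀ i, w' (e i) = w i := fun i => e.injective.extend_apply w _ i
      have hz'e : ∀ i, z' (e i) = z i := fun i => e.injective.extend_apply z _ i
      have hw'0 : ∀ j, j ∉ Finset.univ.image e → w' j = 0 := by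
        intro j hj
        apply Function.extend_apply'
        rintro ⟨i, rfl⟩
        exact hj (Finset.mem_image_of_mem e (Finset.mem_univ i))
      refine ⟨(w', z'), ⟨⟨?_, ?_⟩, ?_⟩, ?_⟩
      · intro j
        show 0 ≤ w' j
        by_cases hj : j ∈ Finset.univ.image e
        · obtain ⟨i, -, rfl⟩ := Finset.mem_image.1 hj
          rw [hw'e]; exact (hwpos i).le
        · rw [hw'0 j hj]
      · rw [← Finset.sum_subset (Finset.subset_univ (Finset.univ.image e))
          (fun j _ hj => hw'0 j hj),
          Finset.sum_image (fun a _ b _ h => e.injective h)]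
        simpa [hw'e] using hwsum
      · intro j _
        show z' j ∈ s
        by_cases hj : ∃ i, e i = j
        · obtain ⟨i, rfl⟩ := hj
          rw [hz'e]
          exact hzs (Set.mem_range_self i)
        · rw [hz', Function.extend_apply' _ _ _ hj]
          exact hs₀
      · have : ∀ j ∈ Finset.univ, j ∉ Finset.univ.image e → w' j • z' j = 0 := by
          intro j _ hj; rw [hw'0 j hj, zero_smul]
        rw [hfdef]
        simp only
        rw [← Finset.sum_subset (Finset.subset_univ (Finset.univ.image e)) this,
          Finset.sum_image (fun a _ b _ h => e.injective h)]
        simp only [hw'e, hz'e]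
        exact hXeq
  rw [← himg]
  exact hT.image hf

open Filter Metric Set

/-- For every `ε > 0`, eventually the sets `K n` have an extreme point within `ε` of `x`. -/
lemma key_step {N : ℕ}
    (K : ℕ → Set (EuclideanSpace ℝ (Fin N))) (L : Set (EuclideanSpace ℝ (Fin N)))
    (hKc : ∀ n, IsCompact (K n)) (hKconv : ∀ n, Convex ℝ (K n))
    (hKne : ∀ n, (K n).Nonempty)
    (hLc : IsCompact L) (hLconv : Convex ℝ L) (hLne : L.Nonempty)
    (hH : Tendsto (fun n => Metric.hausdorffDist (K n) L) atTop (nhds 0))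
    {x : EuclideanSpace ℝ (Fin N)} (hx : x ∈ Set.extremePoints ℝ L) {ε : ℝ} (hε : 0 < ε) :
    ∀ᶠ n in atTop, ∃ e ∈ Set.extremePoints ℝ (K n), dist x e < ε := by
  have hne : ∀ n, EMetric.hausdorffEdist (K n) L ≠ ⊤ := fun n =>
    hausdorffEdist_ne_top_of_nonempty_of_bounded (hKne n) hLne (hKc n).isBounded hLc.isBounded
  set S : Set (EuclideanSpace ℝ (Fin N)) := L \ ball x (ε / 2) with hS
  rcases S.eq_empty_or_nonempty with hSe | hSne
  · -- L ⊆ ball x (ε/2); any extreme point works eventually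
    have hLb : L ⊆ ball x (ε / 2) := by
      intro z hz
      by_contra h
      have hzS : z ∈ S := ⟨hz, h⟩
      rw [hSe] at hzS
      exact hzS
    have hev : ∀ᶠ n in atTop, Metric.hausdorffDist (K n) L < ε / 4 := by
      have := hH.eventually (eventually_lt_nhds (by positivity : (0:ℝ) < ε / 4))
      simpa using this
    filter_upwards [hev] with n hd
    obtain ⟨e, he⟩ := (hKc n).extremePoints_nonempty (hKne n)
    refine ⟨e, he, ?_⟩
    have heK : e ∈ K n := extremePoints_subset he
    have h1 : infDist e L < ε / 4 :=
      lt_of_le_of_lt (infDist_le_hausdorffDist_of_mem heK (hne n)) hd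
    obtain ⟨z, hzL, hez⟩ := (infDist_lt_iff hLne).1 h1
    calc dist x e ≤ dist x z + dist z e := dist_triangle x z e
    _ < ε / 2 + ε / 4 := by
        refine add_lt_add ?_ (by rwa [dist_comm])
        rw [dist_comm]; exact hLb hzL
    _ < ε := by linarith
  · -- main case
    set D : Set (EuclideanSpace ℝ (Fin N)) := convexHull ℝ S with hD
    have hDc : IsCompact D :=
      isCompact_convexHull_aux (hLc.inter_right isOpen_ball.isClosed_compl)
    have hDne : D.Nonempty := hSne.mono (subset_convexHull ℝ S)
    have hxD : x ∉ D := by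
      intro h
      have hsub : S ⊆ L \ {x} := by
        apply Set.diff_subset_diff_right
        simp only [Set.singleton_subset_iff]
        exact mem_ball_self (by positivity)
      have := (hLconv.mem_extremePoints_iff_mem_diff_convexHull_diff.1 hx).2
      exact this (convexHull_mono hsub h)
    set δ : ℝ := infDist x D with hδdef
    have hδ : 0 < δ := (hDc.isClosed.notMem_iff_infDist_pos hDne).1 hxD
    set η : ℝ := min (δ / 3) (ε / 4) with hη
    have hηpos : 0 < η := lt_min (by positivity) (by positivity)
    have hev : ∀ᶠ n in atTop, Metric.hausdorffDist (K n) L < η := by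
      have := hH.eventually (eventually_lt_nhds hηpos)
      simpa using this
    filter_upwards [hev] with n hd
    by_contra hcon
    push_neg at hcon
    -- every extreme point of K n is at distance ≥ ε from x
    have hEsub : Set.extremePoints ℝ (K n) ⊆ cthickening η D := by
      intro e he
      have heK : e ∈ K n := extremePoints_subset he
      have h1 : infDist e L < η :=
        lt_of_le_of_lt (infDist_le_hausdorffDist_of_mem heK (hne n)) hd
      obtain ⟨z, hzL, hez⟩ := (infDist_lt_iff hLne).1 h1
      have hzS : z ∈ S := by
        refine ⟨hzL, ?_⟩
        simp only [mem_ball, not_lt]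
        have hxe : ε ≤ dist x e := hcon e he
        have : dist x e ≤ dist x z + dist z e := dist_triangle x z e
        have hη4 : η ≤ ε / 4 := min_le_right _ _
        rw [dist_comm z x]
        rw [dist_comm] at hez
        linarith
      exact mem_cthickening_of_dist_le e z η D (subset_convexHull ℝ S hzS) hez.le
    have hKsub : K n ⊆ cthickening η D := by
      have h1 : convexHull ℝ (Set.extremePoints ℝ (K n)) ⊆ cthickening η D :=
        convexHull_min hEsub ((convex_convexHull ℝ S).cthickening η)
      have h2 : closure (convexHull ℝ (Set.extremePoints ℝ (K n))) ⊆ cthickening η D :=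
        isClosed_cthickening.closure_subset_iff.2 h1
      rw [closure_convexHull_extremePoints (hKc n) (hKconv n)] at h2
      exact h2
    -- x is close to K n
    have h3 : infDist x (K n) < η := by
      have := infDist_le_hausdorffDist_of_mem hx.1
        (by rw [EMetric.hausdorffEdist_comm]; exact hne n)
      rw [hausdorffDist_comm] at this
      exact lt_of_le_of_lt this hd
    obtain ⟨y, hyK, hxy⟩ := (infDist_lt_iff (hKne n)).1 h3
    have h4 : infDist y D ≤ η := by
      have := mem_cthickening_iff.1 (hKsub hyK)
      rw [infDist]
      exact ENNReal.toReal_le_of_le_ofReal hηpos.le this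
    have h5 : δ ≤ infDist y D + dist x y := infDist_le_infDist_add_dist
    have hη3 : η ≤ δ / 3 := min_le_left _ _
    linarith
/-- If a sequence of nonempty compact convex subsets of `ℝ^N` converges in the Hausdorff
metric to a compact convex set `L`, then every extreme point of `L` is the limit of a
sequence of extreme points of the sets in the sequence. -/
theorem extremePoint_limit_of_hausdorff_convergence {N : ℕ}
    (K : ℕ → Set (EuclideanSpace ℝ (Fin N))) (L : Set (EuclideanSpace ℝ (Fin N)))
    (hKc : ∀ n, IsCompact (K n)) (hKconv : ∀ n, Convex ℝ (K n))
    (hKne : ∀ n, (K n).Nonempty)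
    (hLc : IsCompact L) (hLconv : Convex ℝ L) (hLne : L.Nonempty)
    (hH : Tendsto (fun n => Metric.hausdorffDist (K n) L) atTop (nhds 0)) :
    ∀ x ∈ Set.extremePoints ℝ L,
      ∃ v : ℕ → EuclideanSpace ℝ (Fin N),
        (∀ n, v n ∈ Set.extremePoints ℝ (K n)) ∧ Tendsto v atTop (nhds x) := by
  intro x hx
  have hEne : ∀ n, (Set.extremePoints ℝ (K n)).Nonempty := fun n =>
    (hKc n).extremePoints_nonempty (hKne n)
  have hch : ∀ n : ℕ, ∃ e ∈ Set.extremePoints ℝ (K n),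
      dist x e < infDist x (Set.extremePoints ℝ (K n)) + 1 / (n + 1) := fun n =>
    (infDist_lt_iff (hEne n)).1 (lt_add_of_pos_right _ (by positivity))
  choose v hv hvd using hch
  refine ⟨v, hv, ?_⟩
  have hinf : Tendsto (fun n => infDist x (Set.extremePoints ℝ (K n))) atTop (nhds 0) := by
    rw [Metric.tendsto_atTop]
    intro ε hε
    obtain ⟨M, hM⟩ := eventually_atTop.1
      (key_step K L hKc hKconv hKne hLc hLconv hLne hH hx hε)
    refine ⟨M, fun n hn => ?_⟩
    obtain ⟨e, he, hde⟩ := hM n hn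
    rw [Real.dist_eq, sub_zero, abs_of_nonneg infDist_nonneg]
    exact lt_of_le_of_lt (infDist_le_dist_of_mem he) hde
  rw [tendsto_iff_dist_tendsto_zero]
  apply squeeze_zero (fun n => dist_nonneg)
    (g := fun n => infDist x (Set.extremePoints ℝ (K n)) + 1 / (n + 1))
    (fun n => by rw [dist_comm]; exact (hvd n).le)
  simpa using hinf.add tendsto_one_div_add_atTop_nhds_zero_nat
end

section
/- If a sequence (P_n) of convex polygons in the plane, each with exactly k vertices, converges in the Hausdorff topology (on closures) to a convex polygon P which also has exactly k vertices, then for all sufficiently large n the vertices of P_n can be labeled v_n^1,…,v_n^k so that v_n^i converges to the i-th vertex of P for each i; i.e., P_n → P in the vertex topology on the symmetric product. -/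
open Filter

/-- If a sequence `P n` of convex polygons in the plane, each with exactly `k` vertices,
converges in the Hausdorff topology (on closures) to a convex polygon `Q` with exactly `k`
vertices, then eventually the vertices of `P n` can be labeled so that, label by label,
they converge to the corresponding vertices of `Q`; i.e. `P n → Q` in the vertex topology. -/
theorem polygon_hausdorff_convergence_implies_vertex_convergence (k : ℕ)
    (P : ℕ → Set (ℝ × ℝ)) (Q : Set (ℝ × ℝ))
    (hPo : ∀ n, IsOpen (P n)) (hPb : ∀ n, Bornology.IsBounded (P n))
    (hPc : ∀ n, Convex ℝ (P n)) (hPne : ∀ n, (P n).Nonempty)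
    (hQo : IsOpen Q) (hQb : Bornology.IsBounded Q) (hQc : Convex ℝ Q) (hQne : Q.Nonempty)
    (hPk : ∀ n, (Set.extremePoints ℝ (closure (P n))).ncard = k)
    (w : Fin k → ℝ × ℝ) (hwinj : Function.Injective w)
    (hwrange : Set.range w = Set.extremePoints ℝ (closure Q))
    (hH : Tendsto (fun n => Metric.hausdorffDist (closure (P n)) (closure Q))
      atTop (nhds 0)) :
    ∃ v : ℕ → Fin k → ℝ × ℝ,
      (∀ᶠ n in atTop, Function.Injective (v n) ∧
        Set.range (v n) = Set.extremePoints ℝ (closure (P n))) ∧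
      ∀ i, Tendsto (fun n => v n i) atTop (nhds (w i)) := by
  classical
  set K : Set (ℝ × ℝ) := closure Q with hKdef
  have hKb : Bornology.IsBounded K := hQb.closure
  have hKcpt : IsCompact K := hQb.isCompact_closure
  have hKconv : Convex ℝ K := hQc.closure
  have hKne : K.Nonempty := hQne.closure
  set E : ℕ → Set (ℝ × ℝ) := fun n => Set.extremePoints ℝ (closure (P n)) with hEdef
  have hKnb : ∀ n, Bornology.IsBounded (closure (P n)) := fun n => (hPb n).closure
  have hKncpt : ∀ n, IsCompact (closure (P n)) := fun n => (hPb n).isCompact_closure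
  have hKnconv : ∀ n, Convex ℝ (closure (P n)) := fun n => (hPc n).closure
  have hKnne : ∀ n, (closure (P n)).Nonempty := fun n => (hPne n).closure
  -- k is positive
  have hkpos : 0 < k := by
    obtain ⟨x, hx⟩ := hKcpt.extremePoints_nonempty hKne
    rw [← hwrange] at hx
    obtain ⟨i, rfl⟩ := hx
    exact i.pos
  have hEfin : ∀ n, (E n).Finite := by
    intro n
    rw [← Set.not_infinite]
    intro h
    have := h.ncard
    rw [hPk n] at this
    omega
  have hEne : ∀ n, (E n).Nonempty := fun n =>
    Set.nonempty_of_ncard_ne_zero (by rw [hPk n]; omega)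
  -- each closure (P n) is the convex hull of its extreme points
  have hhull : ∀ n, closure (P n) = convexHull ℝ (E n) := by
    intro n
    have h1 := closure_convexHull_extremePoints (hKncpt n) (hKnconv n)
    rwa [IsClosed.closure_eq (((hEfin n).isCompact_convexHull ℝ).isClosed), eq_comm] at h1
  have hwfin : (Set.range w).Finite := Set.finite_range w
  have hwK : Set.range w ⊆ K := by
    rw [hwrange]; exact extremePoints_subset
  have hKhull : K = convexHull ℝ (Set.range w) := by
    have h1 := closure_convexHull_extremePoints hKcpt hKconv
    rw [← hwrange] at h1
    rwa [IsClosed.closure_eq ((hwfin.isCompact_convexHull ℝ).isClosed), eq_comm] at h1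
  -- separating functionals for each vertex of K
  have hsep : ∀ i : Fin k, ∃ (f : (ℝ × ℝ) →L[ℝ] ℝ) (u : ℝ),
      (∀ a ∈ convexHull ℝ (Set.range w \ {w i}), f a < u) ∧ u < f (w i) := by
    intro i
    have hwi : w i ∈ Set.extremePoints ℝ K := by
      rw [← hwrange]; exact ⟨i, rfl⟩
    have hnot : w i ∉ convexHull ℝ (K \ {w i}) :=
      ((hKconv.mem_extremePoints_iff_mem_diff_convexHull_diff).1 hwi).2
    have hnot' : w i ∉ convexHull ℝ (Set.range w \ {w i}) := fun h =>
      hnot (convexHull_mono (Set.diff_subset_diff_left hwK) h)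
    exact geometric_hahn_banach_closed_point (convex_convexHull ℝ _)
      ((hwfin.diff (t := {w i})).isCompact_convexHull ℝ).isClosed hnot'
  -- key: eventually there is an extreme point of `closure (P n)` within ε of `w i`
  have key : ∀ i : Fin k, ∀ ε > (0 : ℝ), ∀ᶠ n in atTop, ∃ e ∈ E n, dist e (w i) < ε := by
    intro i ε hε
    obtain ⟨f, u, hfu, hui⟩ := hsep i
    set g : ℝ := f (w i) - u with hgdef
    have hgpos : 0 < g := sub_pos.2 hui
    set L : ℝ := ‖f‖ with hLdef
    have hL0 : 0 ≤ L := norm_nonneg f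
    set D : ℝ := Metric.diam K with hDdef
    have hD0 : 0 ≤ D := Metric.diam_nonneg
    set M : ℝ := 1 + 2 * L * D / g with hMdef
    have hM1 : (1 : ℝ) ≤ M := le_add_of_nonneg_right (by positivity)
    have hMpos : (0 : ℝ) < M := lt_of_lt_of_le one_pos hM1
    set d : ℝ := ε / (2 * M) with hddef
    have hd : 0 < d := by positivity
    have hLip : ∀ x y : ℝ × ℝ, |f x - f y| ≤ L * dist x y := by
      intro x y
      calc |f x - f y| = ‖f (x - y)‖ := by rw [map_sub]; rfl
        _ ≤ L * ‖x - y‖ := f.le_opNorm _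
        _ = L * dist x y := by rw [dist_eq_norm]
    have hdiam : ∀ x ∈ K, ∀ y ∈ K, dist x y ≤ D := fun x hx y hy =>
      Metric.dist_le_diam_of_mem hKb hx hy
    have hdM : d * M = ε / 2 := by
      rw [hddef]
      field_simp
    have heq : d + 2 * L * d / g * D = d * M := by rw [hMdef]; ring
    have hdle : d < ε := by
      rw [hddef, div_lt_iff₀ (by positivity)]
      nlinarith [mul_le_mul_of_nonneg_left hM1 hε.le]
    clear_value d M D L g
    have hev : ∀ᶠ n in atTop, Metric.hausdorffDist (closure (P n)) K < d := by
      filter_upwards [Metric.tendsto_nhds.1 hH d hd] with n hn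
      have h1 : |Metric.hausdorffDist (closure (P n)) K - 0| < d := by
        simpa [Real.dist_eq] using hn
      have h2 : (0 : ℝ) ≤ Metric.hausdorffDist (closure (P n)) K :=
        Metric.hausdorffDist_nonneg
      rw [sub_zero, abs_of_nonneg h2] at h1
      exact h1
    filter_upwards [hev] with n hn
    have hfin : EMetric.hausdorffEdist (closure (P n)) K ≠ ⊤ :=
      Metric.hausdorffEdist_ne_top_of_nonempty_of_bounded (hKnne n) hKne (hKnb n) hKb
    have hwiK : w i ∈ K := hwK ⟨i, rfl⟩
    obtain ⟨x, hx, hxd⟩ := Metric.exists_dist_lt_of_hausdorffDist_lt' hwiK hn hfin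
    obtain ⟨e, he, hemax⟩ := Set.exists_max_image (E n) f (hEfin n) (hEne n)
    refine ⟨e, he, ?_⟩
    have heP : e ∈ closure (P n) := extremePoints_subset he
    -- f is maximized over `closure (P n)` at `e`
    have hmax : ∀ z ∈ closure (P n), f z ≤ f e := by
      intro z hz
      rw [hhull n] at hz
      obtain ⟨y, hy, hyz⟩ :=
        (f.toLinearMap.convexOn (convex_univ)).exists_ge_of_mem_convexHull
          (Set.subset_univ _) hz
      exact le_trans hyz (hemax y hy)
    have h1 : f (w i) - L * d ≤ f x := by
      have := hLip x (w i)
      have h2 : |f x - f (w i)| ≤ L * dist x (w i) := this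
      have h3 : dist x (w i) ≤ d := le_of_lt hxd
      have h4 : L * dist x (w i) ≤ L * d := mul_le_mul_of_nonneg_left h3 hL0
      have := abs_le.1 h2
      linarith [this.1]
    have h2 : f x ≤ f e := hmax x hx
    obtain ⟨q, hq, hqd⟩ := Metric.exists_dist_lt_of_hausdorffDist_lt heP hn hfin
    have h3 : f e - L * d ≤ f q := by
      have h2' := hLip e q
      have h3' : dist e q ≤ d := le_of_lt hqd
      have h4 : L * dist e q ≤ L * d := mul_le_mul_of_nonneg_left h3' hL0
      have := abs_le.1 h2'
      linarith [this.1]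
    have hfq : f (w i) - 2 * L * d ≤ f q := by linarith
    by_cases hrem : (Set.range w \ {w i}).Nonempty
    · have hq' : q ∈ convexHull ℝ (insert (w i) (Set.range w \ {w i})) := by
        rw [Set.insert_diff_singleton, Set.insert_eq_self.2 (Set.mem_range_self i)]
        rwa [hKhull] at hq
      rw [convexHull_insert hrem, mem_convexJoin] at hq'
      obtain ⟨p, hp, c, hc, hqseg⟩ := hq'
      rw [Set.mem_singleton_iff] at hp
      subst hp
      obtain ⟨a, b, ha, hb, hab, hq2⟩ := hqseg
      have hfc : f c < u := hfu c hc
      have hfq2 : f q = a * f (w i) + b * f c := by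
        rw [← hq2]
        simp [map_add, map_smul]
      have ha2 : a * f (w i) = f (w i) - b * f (w i) := by
        have : a = 1 - b := by linarith
        rw [this]; ring
      have hbg' : b * g = b * f (w i) - b * u := by rw [hgdef]; ring
      have hbg : b * g ≤ 2 * L * d := by
        have hmul : b * f c ≤ b * u := mul_le_mul_of_nonneg_left hfc.le hb
        linarith
      have hble : b ≤ 2 * L * d / g := by
        rw [le_div_iff₀ hgpos]; linarith
      have hcK : c ∈ K :=
        convexHull_min (le_trans Set.diff_subset hwK) hKconv hc
      have hqwi : dist q (w i) ≤ b * D := by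
        have hsub : q - w i = b • (c - w i) := by
          rw [← hq2]
          have : a = 1 - b := by linarith
          rw [this]
          module
        have hdd : dist c (w i) ≤ D := hdiam c hcK (w i) hwiK
        calc dist q (w i) = ‖q - w i‖ := dist_eq_norm _ _
          _ = ‖b • (c - w i)‖ := by rw [hsub]
          _ = |b| * ‖c - w i‖ := by rw [norm_smul]; rfl
          _ = b * dist c (w i) := by rw [abs_of_nonneg hb, dist_eq_norm]
          _ ≤ b * D := mul_le_mul_of_nonneg_left hdd hb
      have hbD : b * D ≤ 2 * L * d / g * D := mul_le_mul_of_nonneg_right hble hD0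
      have htot : dist e (w i) < d + 2 * L * d / g * D :=
        calc dist e (w i) ≤ dist e q + dist q (w i) := dist_triangle _ _ _
          _ < d + (2 * L * d / g * D) := by
              have := le_trans hqwi hbD
              linarith
      have heps : d + 2 * L * d / g * D ≤ ε := by
        rw [heq, hdM]
        linarith
      linarith
    · -- range w = {w i}, so K = {w i}
      have hall : Set.range w = {w i} := by
        rw [Set.not_nonempty_iff_eq_empty, Set.diff_eq_empty] at hrem
        exact le_antisymm hrem (Set.singleton_subset_iff.2 ⟨i, rfl⟩)
      have hqe : q = w i := by
        rw [hKhull, hall, convexHull_singleton] at hq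
        exact hq
      rw [← hqe]
      exact hqd.trans hdle
  -- choose v n i to be a nearest extreme point of `closure (P n)` to `w i`
  choose v hv hvmin using fun n (i : Fin k) =>
    Set.exists_min_image (E n) (fun e => dist e (w i)) (hEfin n) (hEne n)
  have htend : ∀ i, Tendsto (fun n => v n i) atTop (nhds (w i)) := by
    intro i
    rw [Metric.tendsto_nhds]
    intro ε hε
    filter_upwards [key i ε hε] with n hn
    obtain ⟨e, he, hed⟩ := hn
    exact lt_of_le_of_lt (hvmin n i e he) hed
  refine ⟨v, ?_, htend⟩
  -- a uniform gap between distinct vertices of K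
  obtain ⟨δ, hδpos, hδ⟩ : ∃ δ > (0 : ℝ), ∀ i j : Fin k, i ≠ j → δ ≤ dist (w i) (w j) := by
    set s := Finset.univ.filter (fun p : Fin k × Fin k => p.1 ≠ p.2) with hs
    rcases s.eq_empty_or_nonempty with h | h
    · exact ⟨1, one_pos, fun i j hij => absurd
        (Finset.mem_filter.2 ⟨Finset.mem_univ _, hij⟩ : (i, j) ∈ s)
        (Finset.eq_empty_iff_forall_notMem.1 h (i, j))⟩
    · refine ⟨s.inf' h (fun p => dist (w p.1) (w p.2)), ?_, ?_⟩
      · show (0 : ℝ) < _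
        rw [Finset.lt_inf'_iff]
        intro p hp
        have hp' : p.1 ≠ p.2 := (Finset.mem_filter.1 hp).2
        exact dist_pos.2 fun hww => hp' (hwinj hww)
      · intro i j hij
        exact Finset.inf'_le _ (Finset.mem_filter.2 ⟨Finset.mem_univ _, hij⟩ : (i, j) ∈ s)
  have hclose : ∀ᶠ n in atTop, ∀ i, dist (v n i) (w i) < δ / 2 := by
    rw [eventually_all]
    intro i
    exact Metric.tendsto_nhds.1 (htend i) (δ / 2) (by positivity)
  filter_upwards [hclose] with n hn
  have hinj : Function.Injective (v n) := by
    intro i j hij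
    by_contra hne
    have h1 : dist (w i) (w j) ≤ dist (w i) (v n i) + dist (v n j) (w j) := by
      rw [hij]
      exact dist_triangle _ _ _
    have h2 := hn i
    have h3 := hn j
    rw [dist_comm] at h2
    have := hδ i j hne
    linarith
  refine ⟨hinj, ?_⟩
  have hsub : Set.range (v n) ⊆ E n := by
    rintro _ ⟨i, rfl⟩
    exact hv n i
  apply Set.eq_of_subset_of_ncard_le hsub _ (hEfin n)
  rw [hPk n, ← Set.image_univ, Set.ncard_image_of_injective _ hinj, Set.ncard_univ]
  simp
end

section
/- Let φ(z) be a nonzero polynomial and k ≥ 1. The function u₊(z) = (1/k) log(a + |φ(z)|²) is a supersolution of the equation Δu = 2e^u − 2|φ|² e^{−(k−1)u} on ℂ for all sufficiently large a > 0; concretely, Δu₊ ≤ 2e^{u₊} − 2|φ|² e^{−(k−1)u₊} holds everywhere provided a is large enough that 2|φ'(z)|² ≤ k (a + |φ(z)|²)^{1/k + 1} for all z ∈ ℂ, and such a exists. -/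
/-- The flat Laplacian `Δ = ∂²/∂x² + ∂²/∂y² = 4 ∂²/∂z∂z̄` of a function on `ℂ`,
expressed via second directional derivatives in the directions `1` and `i`. -/
noncomputable def lap (f : ℂ → ℝ) (z : ℂ) : ℝ :=
  iteratedFDeriv ℝ 2 f z ![1, 1] + iteratedFDeriv ℝ 2 f z ![Complex.I, Complex.I]

open Complex Polynomial Finset

lemma abs_eval_le (p : Polynomial ℂ) (m : ℕ) (hm : p.natDegree ≤ m) (z : ℂ)
    (hz : 1 ≤ ‖z‖) :
    ‖p.eval z‖ ≤ (∑ i ∈ Finset.range (m + 1), ‖p.coeff i‖) *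
      ‖z‖ ^ m := by
  rw [Polynomial.eval_eq_sum_range' (Nat.lt_succ_of_le hm)]
  calc ‖∑ i ∈ Finset.range (m + 1), p.coeff i * z ^ i‖
      ≤ ∑ i ∈ Finset.range (m + 1), ‖p.coeff i * z ^ i‖ :=
        norm_sum_le _ _
    _ ≤ ∑ i ∈ Finset.range (m + 1), ‖p.coeff i‖ * ‖z‖ ^ m := by
        refine Finset.sum_le_sum fun i hi => ?_
        rw [norm_mul, norm_pow]
        exact mul_le_mul_of_nonneg_left
          (pow_le_pow_right₀ hz (Nat.lt_succ_iff.mp (Finset.mem_range.mp hi)))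
          (norm_nonneg _)
    _ = _ := (Finset.sum_mul _ _ _).symm

lemma key_bound (φ : Polynomial ℂ) :
    ∃ M : ℝ, 0 ≤ M ∧ ∀ z : ℂ,
      ‖φ.derivative.eval z‖ ^ 2 ≤ M * (1 + ‖φ.eval z‖ ^ 2) := by
  rcases Nat.eq_zero_or_pos φ.natDegree with h0 | hn
  · refine ⟨0, le_refl _, fun z => ?_⟩
    rw [Polynomial.eq_C_of_natDegree_eq_zero h0]
    simp
  · set n := φ.natDegree with hdef
    set E := φ.eraseLead with hE
    set B : ℝ := ∑ i ∈ Finset.range n, ‖E.coeff i‖ with hB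
    set B' : ℝ := ∑ i ∈ Finset.range n, ‖φ.derivative.coeff i‖ with hB'
    have hB0 : 0 ≤ B := Finset.sum_nonneg fun i _ => norm_nonneg _
    have hB'0 : 0 ≤ B' := Finset.sum_nonneg fun i _ => norm_nonneg _
    have hlc : ‖φ.leadingCoeff‖ ≠ 0 := by
      simp [Polynomial.leadingCoeff_ne_zero, Polynomial.ne_zero_of_natDegree_gt hn]
    have hlcpos : 0 < ‖φ.leadingCoeff‖ := lt_of_le_of_ne (norm_nonneg _) (Ne.symm hlc)
    set R : ℝ := max 1 ((B + 1) / ‖φ.leadingCoeff‖) with hR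
    have hR1 : (1:ℝ) ≤ R := le_max_left _ _
    -- bound on the compact ball
    obtain ⟨z₀, _, hz₀⟩ := (isCompact_closedBall (0:ℂ) R).exists_isMaxOn
      ⟨0, Metric.mem_closedBall_self (by linarith)⟩
      ((continuous_norm.comp φ.derivative.continuous).pow 2).continuousOn
    set C : ℝ := max 0 (‖φ.derivative.eval z₀‖ ^ 2) with hC
    refine ⟨max C (B' ^ 2), le_trans (le_max_left _ _) (le_max_left _ _), fun z => ?_⟩
    have h1φ : 0 ≤ 1 + ‖φ.eval z‖ ^ 2 := by positivity
    rcases le_total (‖z‖) R with hzR | hzR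
    · -- compact part
      have hmem : z ∈ Metric.closedBall (0:ℂ) R := by
        rw [Metric.mem_closedBall, Complex.dist_eq]
        simpa using hzR
      have : ‖φ.derivative.eval z‖ ^ 2 ≤ C :=
        le_trans (hz₀ hmem) (le_max_right _ _)
      calc ‖φ.derivative.eval z‖ ^ 2 ≤ C := this
        _ ≤ max C (B' ^ 2) * 1 := by simp [le_max_left]
        _ ≤ max C (B' ^ 2) * (1 + ‖φ.eval z‖ ^ 2) := by
            refine mul_le_mul_of_nonneg_left ?_ (le_trans (le_max_left 0 _) (le_max_left _ _))
            nlinarith [sq_nonneg (‖φ.eval z‖)]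
    · -- large |z|
      have hz1 : 1 ≤ ‖z‖ := le_trans hR1 hzR
      have hzpow : (0:ℝ) ≤ ‖z‖ ^ (n - 1) := by positivity
      -- lower bound for |φ z|
      have hEdeg : E.natDegree ≤ n - 1 := φ.eraseLead_natDegree_le
      have hEbound : ‖E.eval z‖ ≤ B * ‖z‖ ^ (n - 1) := by
        have := abs_eval_le E (n - 1) hEdeg z hz1
        rwa [Nat.sub_add_cancel hn] at this
      have hmain : ‖z‖ ^ (n - 1) ≤ ‖φ.eval z‖ := by
        have hsplit : φ.eval z = E.eval z + φ.leadingCoeff * z ^ n := by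
          conv_lhs => rw [← φ.eraseLead_add_C_mul_X_pow]
          rw [Polynomial.eval_add, Polynomial.eval_mul, Polynomial.eval_C,
            Polynomial.eval_pow, Polynomial.eval_X]
        have hlead : ‖φ.leadingCoeff * z ^ n‖
            = ‖φ.leadingCoeff‖ * ‖z‖ ^ n := by
          rw [norm_mul, norm_pow]
        have hzn : ‖z‖ ^ n = ‖z‖ * ‖z‖ ^ (n - 1) := by
          conv_lhs => rw [← Nat.succ_pred_eq_of_pos hn]
          rw [pow_succ, Nat.pred_eq_sub_one]
          ring
        have hlarge : (B + 1) ≤ ‖φ.leadingCoeff‖ * ‖z‖ := by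
          have : (B + 1) / ‖φ.leadingCoeff‖ ≤ ‖z‖ :=
            le_trans (le_max_right _ _) hzR
          calc B + 1 = (B + 1) / ‖φ.leadingCoeff‖ * ‖φ.leadingCoeff‖ := by
                field_simp
            _ ≤ ‖z‖ * ‖φ.leadingCoeff‖ :=
                mul_le_mul_of_nonneg_right this (norm_nonneg _)
            _ = _ := mul_comm _ _
        have : ‖φ.leadingCoeff‖ * ‖z‖ ^ n - B * ‖z‖ ^ (n-1)
            ≥ ‖z‖ ^ (n - 1) := by
          rw [hzn, ← mul_assoc]
          nlinarith
        calc ‖z‖ ^ (n-1)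
            ≤ ‖φ.leadingCoeff‖ * ‖z‖ ^ n - B * ‖z‖ ^ (n-1) := this
          _ ≤ ‖φ.leadingCoeff * z ^ n‖ - ‖E.eval z‖ := by
              rw [hlead]; linarith
          _ ≤ ‖φ.eval z‖ := by
              rw [hsplit]
              have h := norm_add_le (E.eval z + φ.leadingCoeff * z ^ n) (-E.eval z)
              have h2 : E.eval z + φ.leadingCoeff * z ^ n + -E.eval z
                  = φ.leadingCoeff * z ^ n := by ring
              rw [h2, norm_neg] at h
              linarith
      -- upper bound for |φ' z|
      have hderiv : ‖φ.derivative.eval z‖ ≤ B' * ‖z‖ ^ (n - 1) := by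
        have hd : φ.derivative.natDegree ≤ n - 1 := φ.natDegree_derivative_le
        have := abs_eval_le φ.derivative (n - 1) hd z hz1
        rwa [Nat.sub_add_cancel hn] at this
      have hstep : ‖φ.derivative.eval z‖ ≤ B' * ‖φ.eval z‖ :=
        le_trans hderiv (mul_le_mul_of_nonneg_left hmain hB'0)
      have h2 : ‖φ.derivative.eval z‖ ^ 2 ≤ B' ^ 2 * ‖φ.eval z‖ ^ 2 := by
        have := pow_le_pow_left₀ (norm_nonneg _) hstep 2
        rwa [mul_pow] at this
      calc ‖φ.derivative.eval z‖ ^ 2 ≤ B' ^ 2 * ‖φ.eval z‖ ^ 2 := h2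
        _ ≤ max C (B' ^ 2) * (1 + ‖φ.eval z‖ ^ 2) := by
            refine mul_le_mul (le_max_right _ _) (by linarith) (by positivity)
              (le_trans (le_max_left 0 _) (le_max_left _ _))

noncomputable def Dc (b : ℂ) : ℂ →L[ℝ] ℂ :=
  (ContinuousLinearMap.smulRight (1 : ℂ →L[ℂ] ℂ) b).restrictScalars ℝ

@[simp] lemma Dc_apply (b v : ℂ) : Dc b v = v * b := by
  simp [Dc, smul_eq_mul]

lemma hasFDerivAt_eval (p : Polynomial ℂ) (y : ℂ) :
    HasFDerivAt (fun x => p.eval x) (Dc (p.derivative.eval y)) y :=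
  ((p.hasDerivAt y).hasFDerivAt).restrictScalars ℝ

noncomputable def conjCLM : ℂ →L[ℝ] ℂ := Complex.conjCLE.toContinuousLinearMap

@[simp] lemma conjCLM_apply (v : ℂ) : conjCLM v = (starRingEnd ℂ) v := rfl

lemma hasFDerivAt_conj_eval (p : Polynomial ℂ) (y : ℂ) :
    HasFDerivAt (fun x => (starRingEnd ℂ) (p.eval x))
      (conjCLM.comp (Dc (p.derivative.eval y))) y :=
  conjCLM.hasFDerivAt.comp y (hasFDerivAt_eval p y)

-- first derivative of G
lemma conj_mul_self_re (z : ℂ) : ((starRingEnd ℂ) z * z).re = Complex.normSq z := by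
  rw [mul_comm, Complex.mul_conj, Complex.ofReal_re]

lemma hasFDerivAt_G (φ : Polynomial ℂ) (a c : ℝ) (ha : 0 < a) (y : ℂ) :
    HasFDerivAt (fun x => c * Real.log (a + Complex.normSq (φ.eval x)))
      (c • ((a + Complex.normSq (φ.eval y))⁻¹ •
        (Complex.reCLM.comp
          ((starRingEnd ℂ (φ.eval y)) • Dc (φ.derivative.eval y) +
            (conjCLM.comp (Dc (φ.derivative.eval y))).smulRight (φ.eval y))))) y := by
  have hfun : (fun x => c * Real.log (a + Complex.normSq (φ.eval x)))
      = fun x => c * Real.log (a + ((starRingEnd ℂ) (φ.eval x) * φ.eval x).re) := by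
    funext x
    rw [conj_mul_self_re]
  have hP : HasFDerivAt (fun x => (starRingEnd ℂ) (φ.eval x) * φ.eval x)
      ((starRingEnd ℂ (φ.eval y)) • Dc (φ.derivative.eval y) +
        (conjCLM.comp (Dc (φ.derivative.eval y))).smulRight (φ.eval y)) y :=
    (hasFDerivAt_conj_eval φ y).mul' (hasFDerivAt_eval φ y)
  have hN : HasFDerivAt (fun x => a + ((starRingEnd ℂ) (φ.eval x) * φ.eval x).re)
      (Complex.reCLM.comp
        ((starRingEnd ℂ (φ.eval y)) • Dc (φ.derivative.eval y) +
          (conjCLM.comp (Dc (φ.derivative.eval y))).smulRight (φ.eval y))) y :=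
    ((Complex.reCLM.hasFDerivAt.comp y hP).const_add a)
  have hNe : a + ((starRingEnd ℂ) (φ.eval y) * φ.eval y).re ≠ 0 := by
    rw [conj_mul_self_re]
    exact ne_of_gt (lt_of_lt_of_le ha (le_add_of_nonneg_right (Complex.normSq_nonneg _)))
  have := (hN.log hNe).const_mul c
  rw [hfun]
  rw [conj_mul_self_re] at this
  exact this

lemma fderiv_G_apply (φ : Polynomial ℂ) (a c : ℝ) (ha : 0 < a) (y w : ℂ) :
    fderiv ℝ (fun x => c * Real.log (a + Complex.normSq (φ.eval x))) y w =
      c * ((a + Complex.normSq (φ.eval y))⁻¹ *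
        ((starRingEnd ℂ) (φ.eval y) * (w * φ.derivative.eval y)
          + (starRingEnd ℂ) (w * φ.derivative.eval y) * φ.eval y).re) := by
  rw [(hasFDerivAt_G φ a c ha y).fderiv]
  simp [smul_eq_mul, mul_comm, mul_assoc, mul_left_comm]
  ring

lemma contDiff_eval (p : Polynomial ℂ) : ContDiff ℝ 2 (fun x : ℂ => p.eval x) := by
  have h : ContDiff ℂ 2 (fun x : ℂ => p.eval x) := by
    have : (fun x : ℂ => p.eval x)
        = fun x => ∑ i ∈ Finset.range (p.natDegree + 1), p.coeff i * x ^ i := by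
      funext x; rw [Polynomial.eval_eq_sum_range]
    rw [this]
    exact ContDiff.sum fun i _ => contDiff_const.mul (contDiff_id.pow i)
  exact h.restrict_scalars ℝ

lemma contDiff_normSq : ContDiff ℝ 2 (fun z : ℂ => Complex.normSq z) := by
  have : (fun z : ℂ => Complex.normSq z) = fun z : ℂ => z.re * z.re + z.im * z.im := by
    funext z; rw [Complex.normSq_apply]
  rw [this]
  exact (Complex.reCLM.contDiff.mul Complex.reCLM.contDiff).add
    (Complex.imCLM.contDiff.mul Complex.imCLM.contDiff)

lemma contDiffAt_G (φ : Polynomial ℂ) (a c : ℝ) (ha : 0 < a) (z : ℂ) :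
    ContDiffAt ℝ 2 (fun x => c * Real.log (a + Complex.normSq (φ.eval x))) z := by
  have hN : ContDiffAt ℝ 2 (fun x : ℂ => a + Complex.normSq (φ.eval x)) z :=
    (contDiffAt_const.add ((contDiff_normSq.comp (contDiff_eval φ)).contDiffAt))
  have hNe : a + Complex.normSq (φ.eval z) ≠ 0 :=
    ne_of_gt (lt_of_lt_of_le ha (le_add_of_nonneg_right (Complex.normSq_nonneg _)))
  exact contDiffAt_const.mul (ContDiffAt.log hN hNe)

lemma hasFDerivAt_N (φ : Polynomial ℂ) (a : ℝ) (y : ℂ) :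
    HasFDerivAt (fun x => a + Complex.normSq (φ.eval x))
      (Complex.reCLM.comp
        ((starRingEnd ℂ (φ.eval y)) • Dc (φ.derivative.eval y) +
          (conjCLM.comp (Dc (φ.derivative.eval y))).smulRight (φ.eval y))) y := by
  have hfun : (fun x : ℂ => a + Complex.normSq (φ.eval x))
      = fun x => a + ((starRingEnd ℂ) (φ.eval x) * φ.eval x).re := by
    funext x; rw [conj_mul_self_re]
  have hP : HasFDerivAt (fun x => (starRingEnd ℂ) (φ.eval x) * φ.eval x)
      ((starRingEnd ℂ (φ.eval y)) • Dc (φ.derivative.eval y) +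
        (conjCLM.comp (Dc (φ.derivative.eval y))).smulRight (φ.eval y)) y :=
    (hasFDerivAt_conj_eval φ y).mul' (hasFDerivAt_eval φ y)
  rw [hfun]
  exact (Complex.reCLM.hasFDerivAt.comp y hP).const_add a

set_option maxHeartbeats 1000000 in
lemma fderiv_second (φ : Polynomial ℂ) (a c : ℝ) (ha : 0 < a) (z w v : ℂ) :
    fderiv ℝ (fun y => c * ((a + Complex.normSq (φ.eval y))⁻¹ *
        ((starRingEnd ℂ) (φ.eval y) * (w * φ.derivative.eval y)
          + (starRingEnd ℂ) (w * φ.derivative.eval y) * φ.eval y).re)) z v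
    = c * ((a + Complex.normSq (φ.eval z))⁻¹ *
        ((starRingEnd ℂ) (v * φ.derivative.eval z) * (w * φ.derivative.eval z)
          + (starRingEnd ℂ) (φ.eval z) * (w * (v * φ.derivative.derivative.eval z))
          + ((starRingEnd ℂ) (w * (v * φ.derivative.derivative.eval z)) * φ.eval z
            + (starRingEnd ℂ) (w * φ.derivative.eval z) * (v * φ.derivative.eval z))).re)
      - c * (((a + Complex.normSq (φ.eval z)) ^ 2)⁻¹ *
        (((starRingEnd ℂ) (φ.eval z) * (v * φ.derivative.eval z)
            + (starRingEnd ℂ) (v * φ.derivative.eval z) * φ.eval z).re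
          * ((starRingEnd ℂ) (φ.eval z) * (w * φ.derivative.eval z)
            + (starRingEnd ℂ) (w * φ.derivative.eval z) * φ.eval z).re)) := by
  set A := φ.eval z with hA
  set B := φ.derivative.eval z with hBd
  set C := φ.derivative.derivative.eval z with hCd
  have hNe : a + Complex.normSq (φ.eval z) ≠ 0 :=
    ne_of_gt (lt_of_lt_of_le ha (le_add_of_nonneg_right (Complex.normSq_nonneg _)))
  have h2 : HasFDerivAt (fun y => w * φ.derivative.eval y) (w • Dc C) z :=
    (hasFDerivAt_eval φ.derivative z).const_mul w
  have h3 : HasFDerivAt (fun y => (starRingEnd ℂ) (w * φ.derivative.eval y))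
      (conjCLM.comp (w • Dc C)) z := conjCLM.hasFDerivAt.comp z h2
  have h4 := (hasFDerivAt_conj_eval φ z).mul' h2
  have h5 := h3.mul' (hasFDerivAt_eval φ z)
  have h7 := Complex.reCLM.hasFDerivAt.comp z (h4.add h5)
  have h9 := (hasFDerivAt_inv hNe).comp z (hasFDerivAt_N φ a z)
  have h10 := (h9.mul' h7).const_mul c
  simp only [Function.comp_def, Complex.reCLM_apply, Pi.mul_apply, Pi.add_apply] at h10
  rw [h10.fderiv]
  simp only [ContinuousLinearMap.add_apply, ContinuousLinearMap.coe_smul', Pi.smul_apply,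
    ContinuousLinearMap.comp_apply, ContinuousLinearMap.smulRight_apply,
    ContinuousLinearMap.one_apply, Complex.reCLM_apply, Dc_apply, conjCLM_apply,
    ContinuousLinearMap.smul_apply, op_smul_eq_mul, ContinuousLinearMap.toSpanSingleton_apply,
    smul_eq_mul]
  simp only [Complex.add_re, Complex.mul_re, Complex.mul_im, Complex.add_im,
    Complex.conj_re, Complex.conj_im]
  ring

set_option maxHeartbeats 1000000 in
lemma lap_G (φ : Polynomial ℂ) (a c : ℝ) (ha : 0 < a) (z : ℂ) :
    lap (fun x => c * Real.log (a + Complex.normSq (φ.eval x))) z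
      = 4 * a * c * Complex.normSq (φ.derivative.eval z)
          / (a + Complex.normSq (φ.eval z)) ^ 2 := by
  have hNpos : 0 < a + Complex.normSq (φ.eval z) :=
    lt_of_lt_of_le ha (le_add_of_nonneg_right (Complex.normSq_nonneg _))
  have hNe : a + Complex.normSq (φ.eval z) ≠ 0 := ne_of_gt hNpos
  have hdiff : DifferentiableAt ℝ
      (fderiv ℝ (fun x => c * Real.log (a + Complex.normSq (φ.eval x)))) z := by
    have h2 := (contDiffAt_G φ a c ha z).fderiv_right (m := 1)
      (by norm_num)
    exact h2.differentiableAt one_ne_zero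
  have happ : ∀ w v : ℂ,
      fderiv ℝ (fderiv ℝ (fun x => c * Real.log (a + Complex.normSq (φ.eval x)))) z v w
        = fderiv ℝ (fun y =>
            fderiv ℝ (fun x => c * Real.log (a + Complex.normSq (φ.eval x))) y w) z v := by
    intro w v
    rw [fderiv_clm_apply hdiff (differentiableAt_const w)]
    simp
  have hfun : ∀ w : ℂ, (fun y =>
      fderiv ℝ (fun x => c * Real.log (a + Complex.normSq (φ.eval x))) y w)
      = fun y => c * ((a + Complex.normSq (φ.eval y))⁻¹ *
        ((starRingEnd ℂ) (φ.eval y) * (w * φ.derivative.eval y)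
          + (starRingEnd ℂ) (w * φ.derivative.eval y) * φ.eval y).re) :=
    fun w => funext fun y => fderiv_G_apply φ a c ha y w
  rw [lap, iteratedFDeriv_two_apply, iteratedFDeriv_two_apply]
  simp only [Matrix.cons_val_zero, Matrix.cons_val_one, Matrix.head_cons]
  rw [happ 1 1, happ Complex.I Complex.I, hfun 1, hfun Complex.I,
    fderiv_second φ a c ha z 1 1, fderiv_second φ a c ha z Complex.I Complex.I]
  simp only [Complex.add_re, Complex.mul_re, Complex.mul_im, Complex.add_im,
    Complex.conj_re, Complex.conj_im, Complex.I_re, Complex.I_im, Complex.one_re,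
    Complex.one_im]
  rw [eq_div_iff (pow_ne_zero 2 hNe)]
  field_simp [hNe]
  simp only [Complex.normSq_apply]
  ring
lemma part_one (k : ℕ) (hk : 1 ≤ k) (φ : Polynomial ℂ) :
    ∃ a₀ : ℝ, 0 < a₀ ∧ ∀ a : ℝ, a₀ ≤ a → ∀ z : ℂ,
      2 * ‖φ.derivative.eval z‖ ^ 2 ≤
        (k : ℝ) * (a + ‖φ.eval z‖ ^ 2) ^ ((1 : ℝ) / k + 1) := by
  obtain ⟨M, hM0, hM⟩ := key_bound φ
  have hkr : (0:ℝ) < (k:ℝ) := by exact_mod_cast lt_of_lt_of_le one_pos hk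
  set t : ℝ := max 1 (2 * M / (k:ℝ)) with ht
  have ht1 : (1:ℝ) ≤ t := le_max_left _ _
  have ht0 : (0:ℝ) < t := lt_of_lt_of_le one_pos ht1
  refine ⟨max 1 (t ^ k), lt_of_lt_of_le one_pos (le_max_left _ _), fun a hA z => ?_⟩
  have ha1 : (1:ℝ) ≤ a := le_trans (le_max_left _ _) hA
  have ha0 : (0:ℝ) < a := lt_of_lt_of_le one_pos ha1
  have hset : t ^ k ≤ a := le_trans (le_max_right _ _) hA
  set x : ℝ := ‖φ.eval z‖ ^ 2 with hx
  have hx0 : 0 ≤ x := by positivity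
  have hN : (0:ℝ) < a + x := by linarith
  have h1 : 2 * ‖φ.derivative.eval z‖ ^ 2 ≤ 2 * M * (a + x) := by
    have := hM z
    nlinarith
  have h2 : (t ^ k : ℝ) ^ ((1:ℝ)/k) = t := by
    rw [← Real.rpow_natCast t k, ← Real.rpow_mul (le_of_lt ht0)]
    rw [mul_one_div, div_self (ne_of_gt hkr), Real.rpow_one]
  have h3 : t ≤ a ^ ((1:ℝ)/k) := by
    rw [← h2]
    exact Real.rpow_le_rpow (by positivity) hset (by positivity)
  have h4 : a ^ ((1:ℝ)/k) ≤ (a + x) ^ ((1:ℝ)/k) :=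
    Real.rpow_le_rpow (le_of_lt ha0) (by linarith) (by positivity)
  have h5 : (a + x) ^ ((1:ℝ)/k + 1) = (a + x) ^ ((1:ℝ)/k) * (a + x) :=
    Real.rpow_add_one (ne_of_gt hN) _
  have h6 : 2 * M ≤ (k:ℝ) * (a + x) ^ ((1:ℝ)/k) := by
    have ht2 : 2 * M / (k:ℝ) ≤ t := le_max_right _ _
    have : 2 * M / (k:ℝ) ≤ (a + x) ^ ((1:ℝ)/k) := le_trans ht2 (le_trans h3 h4)
    calc 2 * M = (k:ℝ) * (2 * M / (k:ℝ)) := by field_simp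
      _ ≤ (k:ℝ) * (a + x) ^ ((1:ℝ)/k) := mul_le_mul_of_nonneg_left this (le_of_lt hkr)
  calc 2 * ‖φ.derivative.eval z‖ ^ 2 ≤ 2 * M * (a + x) := h1
    _ ≤ ((k:ℝ) * (a + x) ^ ((1:ℝ)/k)) * (a + x) :=
        mul_le_mul_of_nonneg_right h6 (le_of_lt hN)
    _ = (k:ℝ) * (a + x) ^ ((1:ℝ)/k + 1) := by rw [h5]; ring

/-- For a nonzero polynomial `φ` and `k ≥ 1`, the function
`u₊ = (1/k) log(a + |φ|²)` is a supersolution of `Δu = 2e^u − 2|φ|² e^{−(k−1)u}` on `ℂ`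
for all sufficiently large `a > 0`: there exists `a₀ > 0` such that for `a ≥ a₀` the
inequality `2|φ'|² ≤ k (a + |φ|²)^{1/k + 1}` holds everywhere, and whenever that
inequality holds (for some `a > 0`), the supersolution inequality
`Δu₊ ≤ 2e^{u₊} − 2|φ|² e^{−(k−1)u₊}` holds everywhere. -/
theorem supersolution_u_plus (k : ℕ) (hk : 1 ≤ k) (φ : Polynomial ℂ) (hφ : φ ≠ 0) :
    (∃ a₀ : ℝ, 0 < a₀ ∧ ∀ a : ℝ, a₀ ≤ a → ∀ z : ℂ,
      2 * ‖φ.derivative.eval z‖ ^ 2 ≤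
        (k : ℝ) * (a + ‖φ.eval z‖ ^ 2) ^ ((1 : ℝ) / k + 1)) ∧
    (∀ a : ℝ, 0 < a →
      (∀ z : ℂ, 2 * ‖φ.derivative.eval z‖ ^ 2 ≤
        (k : ℝ) * (a + ‖φ.eval z‖ ^ 2) ^ ((1 : ℝ) / k + 1)) →
      ∀ z : ℂ,
        lap (fun w => (1 / (k : ℝ)) * Real.log (a + ‖φ.eval w‖ ^ 2)) z ≤
          2 * Real.exp ((1 / (k : ℝ)) * Real.log (a + ‖φ.eval z‖ ^ 2)) -
            2 * ‖φ.eval z‖ ^ 2 *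
              Real.exp (-((k : ℝ) - 1) *
                ((1 / (k : ℝ)) * Real.log (a + ‖φ.eval z‖ ^ 2)))) := by
  constructor
  · exact part_one k hk φ
  · intro a ha hineq z
    have hkr : (0:ℝ) < (k:ℝ) := by exact_mod_cast lt_of_lt_of_le one_pos hk
    have hkne : (k:ℝ) ≠ 0 := ne_of_gt hkr
    simp only [Complex.sq_norm] at hineq ⊢
    have hN : (0:ℝ) < a + Complex.normSq (φ.eval z) :=
      lt_of_lt_of_le ha (le_add_of_nonneg_right (Complex.normSq_nonneg _))
    rw [lap_G φ a (1 / (k:ℝ)) ha z]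
    have hexp1 : Real.exp (1 / (k:ℝ) * Real.log (a + Complex.normSq (φ.eval z)))
        = (a + Complex.normSq (φ.eval z)) ^ ((1:ℝ)/k) := by
      rw [Real.rpow_def_of_pos hN, mul_comm]
    have hexp2 : Real.exp (-((k:ℝ) - 1) * (1 / (k:ℝ) *
          Real.log (a + Complex.normSq (φ.eval z))))
        = (a + Complex.normSq (φ.eval z)) ^ ((1:ℝ)/k - 1) := by
      rw [Real.rpow_def_of_pos hN]
      congr 1
      field_simp
      ring
    rw [hexp1, hexp2]
    set N := a + Complex.normSq (φ.eval z) with hNdef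
    set nB := Complex.normSq (φ.derivative.eval z) with hnB
    have hnB0 : 0 ≤ nB := Complex.normSq_nonneg _
    have h1 : N ^ ((1:ℝ)/k) = N ^ ((1:ℝ)/k - 1) * N := by
      nth_rewrite 1 [show (1:ℝ)/k = ((1:ℝ)/k - 1) + 1 by ring]
      rw [Real.rpow_add_one (ne_of_gt hN)]
    have hNc1 : N ^ ((1:ℝ)/k + 1) = N ^ ((1:ℝ)/k - 1) * N ^ 2 := by
      rw [show (1:ℝ)/k + 1 = ((1:ℝ)/k - 1) + 2 by ring, Real.rpow_add hN,
        show ((2:ℝ)) = ((2:ℕ):ℝ) by norm_num, Real.rpow_natCast]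
    have hstep : 4 * a * (1 / (k:ℝ)) * nB ≤ 2 * a * N ^ ((1:ℝ)/k + 1) := by
      calc 4 * a * (1 / (k:ℝ)) * nB
          = 2 * (a * (1/(k:ℝ))) * (2 * nB) := by ring
        _ ≤ 2 * (a * (1/(k:ℝ))) * ((k:ℝ) * N ^ ((1:ℝ)/k + 1)) := by
            apply mul_le_mul_of_nonneg_left (hineq z) (by positivity)
        _ = 2 * a * ((1/(k:ℝ)) * (k:ℝ)) * N ^ ((1:ℝ)/k + 1) := by ring
        _ = 2 * a * N ^ ((1:ℝ)/k + 1) := by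
            rw [one_div_mul_cancel hkne]; ring
    rw [div_le_iff₀ (by positivity : (0:ℝ) < N ^ 2)]
    have hkey : (2 * N ^ ((1:ℝ)/k) - 2 * Complex.normSq (φ.eval z) * N ^ ((1:ℝ)/k - 1)) * N ^ 2
        = 2 * a * N ^ ((1:ℝ)/k + 1) := by
      rw [h1, hNc1, hNdef]
      ring
    rw [hkey]
    exact hstep
end

section
/- Let φ be a nonconstant polynomial of degree d ≥ 1 and k ≥ 2 an integer. There exist constants A', R' > 0 and an exponent α = 2dk/(d+k) > 1 such that: if u is the solution of the coupled vortex equation satisfying the coarse bound u(p) − u_φ(p) ≤ M/|φ(p)|² outside a fixed disk containing the zeros of φ, then for any p whose distance r to the zero set of φ in the singular flat metric |φ|^{2/k}|dz|² exceeds R', one has 0 ≤ u(p) − u_φ(p) ≤ A' r^{−α}. The key computational ingredients are: (i) r ≤ C|p|^{(d+k)/k} for |p| large, and (ii) |φ(p)| ≥ C'|p|^d ≥ C'' r^{dk/(d+k)} for |p| large. -/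
open Polynomial

/-- The length of a path `γ : [0,1] → ℂ` in the singular flat metric `|φ|^{2/k} |dz|²`. -/
noncomputable def flatLength (φ : ℂ[X]) (k : ℕ) (γ : ℝ → ℂ) : ℝ :=
  ∫ t in (0:ℝ)..1, ‖φ.eval (γ t)‖ ^ ((1 : ℝ) / k) * ‖deriv γ t‖

/-- The distance from `p` to the zero set of `φ` in the singular flat metric
`|φ|^{2/k} |dz|²`, as the infimum of flat lengths of `C¹` paths from `p` to a zero. -/
noncomputable def flatDistToZeros (φ : ℂ[X]) (k : ℕ) (p : ℂ) : ℝ :=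
  sInf {L : ℝ | ∃ γ : ℝ → ℂ, ContDiff ℝ 1 γ ∧ γ 0 = p ∧ φ.eval (γ 1) = 0 ∧
    L = flatLength φ k γ}

/-- Crude upper bound for polynomial evaluation on a disc of radius `R ≥ 1`. -/
lemma eval_abs_le (q : ℂ[X]) {R : ℝ} (hR : 1 ≤ R) {w : ℂ} (hw : ‖w‖ ≤ R) :
    ‖q.eval w‖ ≤
      (∑ i ∈ Finset.range (q.natDegree+1), ‖q.coeff i‖) * R ^ q.natDegree := by
  rw [eval_eq_sum_range, Finset.sum_mul]
  refine (norm_sum_le _ _).trans (Finset.sum_le_sum fun i hi => ?_)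
  rw [norm_mul, norm_pow]
  refine mul_le_mul_of_nonneg_left ?_ (norm_nonneg _)
  calc ‖w‖ ^ i ≤ R ^ i := pow_le_pow_left₀ (norm_nonneg _) hw i
    _ ≤ R ^ q.natDegree := pow_le_pow_right₀ hR (Nat.lt_succ_iff.mp (Finset.mem_range.mp hi))

/-- Quantitative lower bound `|φ(z)| ≥ c |z|^d` for large `|z|`. -/
lemma exists_lower (φ : ℂ[X]) (hd : 1 ≤ φ.natDegree) :
    ∃ c : ℝ, 0 < c ∧ ∃ R₁ : ℝ, 1 ≤ R₁ ∧ ∀ z : ℂ, R₁ ≤ ‖z‖ →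
      c * ‖z‖ ^ φ.natDegree ≤ ‖φ.eval z‖ := by
  have hφ0 : φ ≠ 0 := fun h => by simp [h] at hd
  set a := ‖φ.leadingCoeff‖ with ha
  have ha0 : 0 < a := by
    simpa [ha] using (norm_pos_iff.mpr (leadingCoeff_ne_zero.mpr hφ0))
  set q := φ.eraseLead with hq
  set Sq := ∑ i ∈ Finset.range (q.natDegree+1), ‖q.coeff i‖ with hSq
  have hSq0 : 0 ≤ Sq := Finset.sum_nonneg fun i _ => norm_nonneg _
  refine ⟨a/2, by positivity, max 1 (2*(Sq+1)/a), le_max_left _ _, fun z hz => ?_⟩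
  have hz1 : (1:ℝ) ≤ ‖z‖ := le_trans (le_max_left _ _) hz
  have hz2 : 2*(Sq+1)/a ≤ ‖z‖ := le_trans (le_max_right _ _) hz
  have hsplit : q.eval z + φ.leadingCoeff * z ^ φ.natDegree = φ.eval z := by
    rw [hq, ← Polynomial.self_sub_C_mul_X_pow]
    simp only [eval_sub, eval_mul, eval_C, eval_pow, eval_X]
    ring
  have h1 : a * ‖z‖ ^ φ.natDegree ≤ ‖φ.eval z‖ + ‖q.eval z‖ := by
    have heq : a * ‖z‖ ^ φ.natDegree = ‖φ.eval z - q.eval z‖ := by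
      rw [← hsplit]; simp [ha, map_mul, map_pow]
    rw [heq]
    exact norm_sub_le _ _
  have h2 : ‖q.eval z‖ ≤ Sq * ‖z‖ ^ q.natDegree :=
    eval_abs_le q hz1 le_rfl
  have hdeg : q.natDegree ≤ φ.natDegree - 1 := hq ▸ φ.eraseLead_natDegree_le
  have h3 : ‖z‖ ^ q.natDegree ≤ ‖z‖ ^ (φ.natDegree - 1) :=
    pow_le_pow_right₀ hz1 hdeg
  have h4 : Sq * ‖z‖ ^ (φ.natDegree - 1) ≤ (a/2) * ‖z‖ ^ φ.natDegree := by
    have hd' : φ.natDegree = (φ.natDegree - 1) + 1 := by omega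
    rw [hd', pow_succ]
    have hza : Sq ≤ (a/2) * ‖z‖ := by
      have h := mul_le_mul_of_nonneg_right hz2 (le_of_lt (by positivity : (0:ℝ) < a/2))
      have heq : 2*(Sq+1)/a * (a/2) = Sq + 1 := by field_simp
      nlinarith
    calc Sq * ‖z‖ ^ (φ.natDegree - 1)
        ≤ ((a/2) * ‖z‖) * ‖z‖ ^ (φ.natDegree-1) :=
          mul_le_mul_of_nonneg_right hza (by positivity)
      _ = (a/2) * (‖z‖ ^ (φ.natDegree-1) * ‖z‖) := by ring
  have h5 : ‖q.eval z‖ ≤ (a/2) * ‖z‖ ^ φ.natDegree :=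
    h2.trans ((mul_le_mul_of_nonneg_left h3 hSq0).trans h4)
  linarith

lemma exp_arith (d k : ℝ) (hd : 0 < d) (hk : 2 ≤ k) : (d/k + 1) * (2*d*k/(d+k)) = 2*d := by
  have hk0 : k ≠ 0 := by linarith
  have hdk : d + k ≠ 0 := by linarith
  field_simp

lemma flatLength_nonneg (φ : ℂ[X]) (k : ℕ) (γ : ℝ → ℂ) : 0 ≤ flatLength φ k γ := by
  apply intervalIntegral.integral_nonneg (by norm_num)
  intro t _
  exact mul_nonneg (Real.rpow_nonneg (norm_nonneg _) _) (norm_nonneg _)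

lemma flatDist_bddBelow (φ : ℂ[X]) (k : ℕ) (p : ℂ) :
    BddBelow {L : ℝ | ∃ γ : ℝ → ℂ, ContDiff ℝ 1 γ ∧ γ 0 = p ∧ φ.eval (γ 1) = 0 ∧
      L = flatLength φ k γ} := by
  refine ⟨0, fun L hL => ?_⟩
  obtain ⟨γ, -, -, -, rfl⟩ := hL
  exact flatLength_nonneg φ k γ

/-- Upper bound on the flat distance via the straight-line path to a root. -/
lemma flatDist_le (φ : ℂ[X]) (k : ℕ) (p z₀ : ℂ) (hz₀ : φ.eval z₀ = 0)
    {Rp : ℝ} (hRp1 : 1 ≤ Rp) (hRpp : ‖p‖ ≤ Rp) (hRpz : ‖z₀‖ ≤ Rp) :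
    flatDistToZeros φ k p ≤
      ((∑ i ∈ Finset.range (φ.natDegree+1), ‖φ.coeff i‖) * Rp ^ φ.natDegree)
        ^ ((1:ℝ)/k) * (2 * Rp) := by
  set γ : ℝ → ℂ := fun t => p + t • (z₀ - p) with hγ
  have hC1 : ContDiff ℝ 1 γ := contDiff_const.add (contDiff_id.smul contDiff_const)
  have hderiv : ∀ t : ℝ, deriv γ t = z₀ - p := by
    intro t
    have h : HasDerivAt γ ((1:ℝ) • (z₀ - p)) t :=
      ((hasDerivAt_id t).smul_const (z₀ - p)).const_add p
    simpa using h.deriv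
  have hmem : flatLength φ k γ ∈ {L : ℝ | ∃ γ : ℝ → ℂ, ContDiff ℝ 1 γ ∧ γ 0 = p ∧
      φ.eval (γ 1) = 0 ∧ L = flatLength φ k γ} :=
    ⟨γ, hC1, by simp [hγ], by simp [hγ, hz₀], rfl⟩
  refine (csInf_le (flatDist_bddBelow φ k p) hmem).trans ?_
  set S := ∑ i ∈ Finset.range (φ.natDegree+1), ‖φ.coeff i‖ with hS
  have hS0 : 0 ≤ S := Finset.sum_nonneg fun i _ => norm_nonneg _
  set B : ℝ := (S * Rp ^ φ.natDegree) ^ ((1:ℝ)/k) with hB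
  have hB0 : 0 ≤ B := Real.rpow_nonneg (by positivity) _
  have hfeq : (fun t => ‖φ.eval (γ t)‖ ^ ((1:ℝ)/k) * ‖deriv γ t‖)
      = fun t => ‖φ.eval (γ t)‖ ^ ((1:ℝ)/k) * ‖z₀ - p‖ := by
    funext t; rw [hderiv t]
  have hcont : Continuous fun t => ‖φ.eval (γ t)‖ ^ ((1:ℝ)/k) * ‖z₀ - p‖ := by
    have h1 : Continuous fun t : ℝ => ‖φ.eval (γ t)‖ :=
      continuous_norm.comp (φ.continuous_aeval.comp hC1.continuous)
    exact (h1.rpow_const fun t => Or.inr (by positivity)).mul continuous_const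
  have hbound : ∀ t ∈ Set.Icc (0:ℝ) 1,
      ‖φ.eval (γ t)‖ ^ ((1:ℝ)/k) * ‖z₀ - p‖ ≤ B * (2 * Rp) := by
    intro t ht
    obtain ⟨ht0, ht1⟩ := ht
    have hγt : ‖γ t‖ ≤ Rp := by
      have heq : γ t = (1-t) • p + t • z₀ := by
        simp only [hγ, smul_sub, sub_smul, one_smul]; ring
      rw [heq]
      calc ‖(1-t) • p + t • z₀‖ ≤ ‖(1-t) • p‖ + ‖t • z₀‖ := norm_add_le _ _
        _ = (1-t) * ‖p‖ + t * ‖z₀‖ := by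
            rw [norm_smul, norm_smul, Real.norm_eq_abs, Real.norm_eq_abs,
              abs_of_nonneg (by linarith), abs_of_nonneg ht0]
        _ ≤ (1-t) * Rp + t * Rp := by
            apply add_le_add
            · exact mul_le_mul_of_nonneg_left (by assumption) (by linarith)
            · exact mul_le_mul_of_nonneg_left (by assumption) ht0
        _ = Rp := by ring
    have h1 : ‖φ.eval (γ t)‖ ^ ((1:ℝ)/k) ≤ B :=
      Real.rpow_le_rpow (norm_nonneg _) (eval_abs_le φ hRp1 hγt) (by positivity)
    have h2 : ‖z₀ - p‖ ≤ 2 * Rp := by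
      calc ‖z₀ - p‖ ≤ ‖z₀‖ + ‖p‖ := norm_sub_le _ _
        _ ≤ Rp + Rp := add_le_add (by assumption) (by assumption)
        _ = 2 * Rp := by ring
    exact mul_le_mul h1 h2 (norm_nonneg _) hB0
  calc flatLength φ k γ = ∫ t in (0:ℝ)..1,
        ‖φ.eval (γ t)‖ ^ ((1:ℝ)/k) * ‖z₀ - p‖ := by
        rw [flatLength, hfeq]
    _ ≤ ∫ _t in (0:ℝ)..1, B * (2 * Rp) :=
        intervalIntegral.integral_mono_on (by norm_num)
          (hcont.intervalIntegrable 0 1) (intervalIntegrable_const) hbound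
    _ = B * (2 * Rp) := by simp

/-- Coarse bound, intrinsic version: let `φ` be a nonconstant polynomial of degree
`d ≥ 1`, `k ≥ 2`, and `u_φ = (1/k) log|φ|²`.  If `u ≥ u_φ` everywhere and
`u − u_φ ≤ M/|φ|²` outside a compact set `K` containing the zeros of `φ`, then there are
constants `A', R' > 0` such that, with the exponent `α = 2dk/(d+k) > 1`, every point `p`
whose flat distance `r` to the zero set of `φ` exceeds `R'` satisfies
`0 ≤ u(p) − u_φ(p) ≤ A' r^{−α}`. -/
theorem coarse_bound_intrinsic (φ : ℂ[X]) (k : ℕ) (hk : 2 ≤ k)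
    (hd : 1 ≤ φ.natDegree) (u : ℂ → ℝ) (M : ℝ)
    (K : Set ℂ) (hK : IsCompact K) (hzeros : ∀ z : ℂ, φ.eval z = 0 → z ∈ K)
    (hlower : ∀ p : ℂ, (1 / (k : ℝ)) * Real.log (‖φ.eval p‖ ^ 2) ≤ u p)
    (hupper : ∀ p : ℂ, p ∉ K →
      u p - (1 / (k : ℝ)) * Real.log (‖φ.eval p‖ ^ 2) ≤
        M / ‖φ.eval p‖ ^ 2) :
    (1 : ℝ) < 2 * φ.natDegree * k / (φ.natDegree + k) ∧
    ∃ A' R' : ℝ, 0 < A' ∧ 0 < R' ∧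
      ∀ p : ℂ, R' < flatDistToZeros φ k p →
        0 ≤ u p - (1 / (k : ℝ)) * Real.log (‖φ.eval p‖ ^ 2) ∧
        u p - (1 / (k : ℝ)) * Real.log (‖φ.eval p‖ ^ 2) ≤
          A' * flatDistToZeros φ k p ^
            (-(2 * (φ.natDegree : ℝ) * k / (φ.natDegree + k))) := by
  have hd' : (1:ℝ) ≤ (φ.natDegree : ℝ) := by exact_mod_cast hd
  have hk' : (2:ℝ) ≤ (k : ℝ) := by exact_mod_cast hk
  have hdk0 : (0:ℝ) < (φ.natDegree : ℝ) + k := by linarith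
  constructor
  · rw [lt_div_iff₀ hdk0]
    nlinarith
  · obtain ⟨z₀, hz₀⟩ := Complex.exists_root (f := φ) (natDegree_pos_iff_degree_pos.mp hd)
    obtain ⟨c, hc, R₁, hR₁, hlow⟩ := exists_lower φ hd
    obtain ⟨R₀, hR₀⟩ := hK.isBounded.subset_closedBall 0
    set S := ∑ i ∈ Finset.range (φ.natDegree+1), ‖φ.coeff i‖ with hS
    have hS0 : 0 < S := by
      have h1 : ‖φ.coeff φ.natDegree‖ ≤ S :=
        Finset.single_le_sum (f := fun i => ‖φ.coeff i‖)
          (fun i _ => norm_nonneg _) (Finset.self_mem_range_succ φ.natDegree)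
      have h2 : 0 < ‖φ.coeff φ.natDegree‖ := by
        rw [Polynomial.coeff_natDegree]
        exact norm_pos_iff.mpr (leadingCoeff_ne_zero.mpr (fun h => by simp [h] at hd))
      linarith
    set R₂ := max (max 1 R₁) (max (‖z₀‖) (R₀ + 1)) with hR₂
    have hR₂1 : (1:ℝ) ≤ R₂ := le_trans (le_max_left _ _) (le_max_left _ _)
    have hR₂R₁ : R₁ ≤ R₂ := le_trans (le_max_right _ _) (le_max_left _ _)
    have hR₂z₀ : ‖z₀‖ ≤ R₂ := le_trans (le_max_left _ _) (le_max_right _ _)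
    have hR₂R₀ : R₀ + 1 ≤ R₂ := le_trans (le_max_right _ _) (le_max_right _ _)
    set α := 2 * (φ.natDegree : ℝ) * k / (φ.natDegree + k) with hα
    have hα0 : 0 < α := div_pos (by nlinarith) hdk0
    set A' := (|M| + 1) * (2 * S ^ ((1:ℝ)/k)) ^ α / c ^ 2 with hA'
    set R' := (S * R₂ ^ φ.natDegree) ^ ((1:ℝ)/k) * (2 * R₂) with hR'
    have hSk : 0 < S ^ ((1:ℝ)/k) := Real.rpow_pos_of_pos hS0 _
    have hA'0 : 0 < A' := by
      apply div_pos _ (pow_pos hc 2)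
      apply mul_pos (by positivity)
      exact Real.rpow_pos_of_pos (by linarith) _
    have hR'0 : 0 < R' := by
      apply mul_pos _ (by linarith)
      exact Real.rpow_pos_of_pos (mul_pos hS0 (pow_pos (by linarith) _)) _
    refine ⟨A', R', hA'0, hR'0, fun p hp => ?_⟩
    set r := flatDistToZeros φ k p with hr
    have hr0 : 0 < r := lt_trans hR'0 hp
    have hpR₂ : R₂ < ‖p‖ := by
      by_contra h
      push_neg at h
      have := flatDist_le φ k p z₀ hz₀ hR₂1 h hR₂z₀
      rw [← hS, ← hR', ← hr] at this
      linarith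
    set X := ‖p‖ with hX
    have hX1 : (1:ℝ) ≤ X := le_trans hR₂1 hpR₂.le
    have hX0 : (0:ℝ) < X := by linarith
    have hrle : r ≤ (S * X ^ φ.natDegree) ^ ((1:ℝ)/k) * (2 * X) := by
      have := flatDist_le φ k p z₀ hz₀ hX1 le_rfl (le_trans hR₂z₀ hpR₂.le)
      rwa [← hS, ← hr] at this
    have hpK : p ∉ K := by
      intro hpKmem
      have h1 := hR₀ hpKmem
      rw [Metric.mem_closedBall] at h1
      have h2 : ‖p‖ ≤ R₀ := by
        simpa [Complex.dist_eq] using h1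
      rw [← hX] at h2
      linarith
    have hφp : c * X ^ φ.natDegree ≤ ‖φ.eval p‖ :=
      hlow p (le_trans hR₂R₁ hpR₂.le)
    have hφp0 : 0 < ‖φ.eval p‖ :=
      lt_of_lt_of_le (mul_pos hc (pow_pos hX0 _)) hφp
    refine ⟨by linarith [hlower p], ?_⟩
    have hup := hupper p hpK
    have hk0 : (k:ℝ) ≠ 0 := by linarith
    have hQ : (S * X ^ φ.natDegree) ^ ((1:ℝ)/k) * (2 * X)
        = 2 * S ^ ((1:ℝ)/k) * X ^ ((φ.natDegree : ℝ)/k + 1) := by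
      rw [Real.mul_rpow hS0.le (pow_nonneg hX0.le _), ← Real.rpow_natCast X φ.natDegree,
        ← Real.rpow_mul hX0.le, Real.rpow_add hX0, Real.rpow_one]
      ring_nf
    have hexp : ((φ.natDegree : ℝ)/k + 1) * α = 2 * φ.natDegree := by
      rw [hα]; exact exp_arith _ _ (by linarith) hk'
    have hrα : r ^ α ≤ (2 * S ^ ((1:ℝ)/k)) ^ α * (X ^ φ.natDegree) ^ 2 := by
      calc r ^ α ≤ (2 * S ^ ((1:ℝ)/k) * X ^ ((φ.natDegree : ℝ)/k + 1)) ^ α :=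
            Real.rpow_le_rpow hr0.le (hrle.trans_eq hQ) hα0.le
        _ = (2 * S ^ ((1:ℝ)/k)) ^ α * (X ^ ((φ.natDegree : ℝ)/k + 1)) ^ α :=
            Real.mul_rpow (by linarith) (Real.rpow_nonneg hX0.le _)
        _ = (2 * S ^ ((1:ℝ)/k)) ^ α * X ^ (((φ.natDegree : ℝ)/k + 1) * α) := by
            rw [← Real.rpow_mul hX0.le]
        _ = (2 * S ^ ((1:ℝ)/k)) ^ α * (X ^ φ.natDegree) ^ 2 := by
            rw [hexp]
            congr 1
            rw [show (2:ℝ) * (φ.natDegree : ℝ) = ((φ.natDegree * 2 : ℕ) : ℝ) by push_cast; ring,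
              Real.rpow_natCast, pow_mul]
    have hφsq : c ^ 2 * (X ^ φ.natDegree) ^ 2 ≤ ‖φ.eval p‖ ^ 2 := by
      have h := mul_self_le_mul_self (mul_pos hc (pow_pos hX0 _)).le hφp
      calc c ^ 2 * (X ^ φ.natDegree) ^ 2
          = (c * X ^ φ.natDegree) * (c * X ^ φ.natDegree) := by ring
        _ ≤ ‖φ.eval p‖ * ‖φ.eval p‖ := h
        _ = ‖φ.eval p‖ ^ 2 := (sq (‖φ.eval p‖)).symm
    have hrαpos : 0 < r ^ α := Real.rpow_pos_of_pos hr0 _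
    have h6 : r ^ α ≤ (2 * S ^ ((1:ℝ)/k)) ^ α / c ^ 2 * ‖φ.eval p‖ ^ 2 := by
      have hc2 : (0:ℝ) < c ^ 2 := pow_pos hc 2
      rw [div_mul_eq_mul_div, le_div_iff₀ hc2]
      calc r ^ α * c ^ 2
          ≤ ((2 * S ^ ((1:ℝ)/k)) ^ α * (X ^ φ.natDegree) ^ 2) * c ^ 2 :=
            mul_le_mul_of_nonneg_right hrα hc2.le
        _ = (2 * S ^ ((1:ℝ)/k)) ^ α * (c ^ 2 * (X ^ φ.natDegree) ^ 2) := by ring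
        _ ≤ (2 * S ^ ((1:ℝ)/k)) ^ α * ‖φ.eval p‖ ^ 2 :=
            mul_le_mul_of_nonneg_left hφsq (Real.rpow_nonneg (by linarith) _)
    have hΦ0 : (0:ℝ) < ‖φ.eval p‖ ^ 2 := pow_pos hφp0 2
    calc u p - (1 / (k : ℝ)) * Real.log (‖φ.eval p‖ ^ 2)
        ≤ M / ‖φ.eval p‖ ^ 2 := hup
      _ ≤ (|M| + 1) / ‖φ.eval p‖ ^ 2 := by
          apply div_le_div_of_nonneg_right ?_ hΦ0.le
          linarith [le_abs_self M]
      _ ≤ A' * r ^ (-α) := by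
          rw [Real.rpow_neg hr0.le, ← div_eq_mul_inv, div_le_div_iff₀ hΦ0 hrαpos]
          calc (|M| + 1) * r ^ α
              ≤ (|M| + 1) * ((2 * S ^ ((1:ℝ)/k)) ^ α / c ^ 2 * ‖φ.eval p‖ ^ 2) :=
                mul_le_mul_of_nonneg_left h6 (by positivity)
            _ = A' * ‖φ.eval p‖ ^ 2 := by rw [hA']; ring
end

section
/- Let u, v be C² functions on an open set with u satisfying Δu = 2e^u − 2e^{−(k−1)u} and v satisfying v ≥ 0 and Δv ≤ 2k·v − k(k−2)v² ≤ 2e^v − 2e^{−(k−1)v}. If η = u − v attains an interior maximum at a point p with η(p) > 0, then at p one has (e^{η} − 1) ≤ e^{−(k−2)v}(e^{−(k−1)η} − 1), which is impossible since η(p) > 0; hence η ≤ 0 wherever an interior positive maximum would exist. (Formally: the inequality Δη ≥ 2e^v(e^η − 1) − 2e^{−(k−1)v}(e^{−(k−1)η} − 1) holds pointwise, and at an interior maximum Δη ≤ 0 forces η ≤ 0.) -/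
/-- At a local max of a function whose derivative is differentiable at the point,
the second derivative is nonpositive. -/
lemma second_deriv_nonpos_at_max (g : ℝ → ℝ) (c : ℝ)
    (hg : ∀ᶠ t in nhds (0 : ℝ), DifferentiableAt ℝ g t)
    (hmax : IsLocalMax g 0) (hder : HasDerivAt (deriv g) c 0) : c ≤ 0 := by
  by_contra hc
  push_neg at hc
  have h0 : deriv g 0 = 0 := hmax.deriv_eq_zero
  have hslope : Filter.Tendsto (slope (deriv g) 0) (nhdsWithin 0 {(0:ℝ)}ᶜ) (nhds c) :=
    hasDerivAt_iff_tendsto_slope.mp hder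
  have hev1 : ∀ᶠ t in nhdsWithin 0 {(0:ℝ)}ᶜ, 0 < slope (deriv g) 0 t :=
    hslope.eventually (eventually_gt_nhds hc)
  have hev2 : ∀ᶠ t in nhds (0:ℝ), DifferentiableAt ℝ g t ∧ g t ≤ g 0 := hg.and hmax
  rw [eventually_nhdsWithin_iff] at hev1
  obtain ⟨ε, hε, hP⟩ := Metric.eventually_nhds_iff.mp (hev1.and hev2)
  -- work on [0, ε/2]
  have hdiff : ∀ t ∈ Set.Icc (0:ℝ) (ε/2), DifferentiableAt ℝ g t := by
    intro t ht
    have : dist t 0 < ε := by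
      rw [Real.dist_eq, sub_zero, abs_of_nonneg ht.1]
      linarith [ht.2]
    exact (hP this).2.1
  have hcont : ContinuousOn g (Set.Icc (0:ℝ) (ε/2)) :=
    fun t ht => (hdiff t ht).continuousAt.continuousWithinAt
  have hpos : ∀ t ∈ interior (Set.Icc (0:ℝ) (ε/2)), 0 < deriv g t := by
    intro t ht
    rw [interior_Icc] at ht
    have hd : dist t 0 < ε := by
      rw [Real.dist_eq, sub_zero, abs_of_pos ht.1]; linarith [ht.2]
    have hne : t ∈ ({(0:ℝ)}ᶜ : Set ℝ) := by
      simp only [Set.mem_compl_iff, Set.mem_singleton_iff]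
      exact ne_of_gt ht.1
    have hsl := (hP hd).1 hne
    rw [slope_def_field, h0, sub_zero, sub_zero] at hsl
    rcases div_pos_iff.mp hsl with ⟨h1, _⟩ | ⟨_, h2⟩
    · exact h1
    · linarith [ht.1]
  have hmono : StrictMonoOn g (Set.Icc (0:ℝ) (ε/2)) :=
    strictMonoOn_of_deriv_pos (convex_Icc _ _) hcont hpos
  have h02 : (0:ℝ) < ε/2 := by linarith
  have hlt : g 0 < g (ε/2) :=
    hmono (Set.mem_Icc.mpr ⟨le_refl _, le_of_lt h02⟩)
      (Set.mem_Icc.mpr ⟨le_of_lt h02, le_refl _⟩) h02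
  have hle : g (ε/2) ≤ g 0 := by
    have : dist (ε/2) 0 < ε := by
      rw [Real.dist_eq, sub_zero, abs_of_pos h02]; linarith
    exact (hP this).2.2
  linarith

/-- Directional second derivative is nonpositive at a local maximum. -/
lemma fderiv2_nonpos_at_max (f : ℂ → ℝ) (p w : ℂ)
    (hf : ContDiffAt ℝ 2 f p) (hmax : IsLocalMax f p) :
    fderiv ℝ (fderiv ℝ f) p w w ≤ 0 := by
  have hfd : ∀ᶠ z in nhds p, DifferentiableAt ℝ f z := by
    filter_upwards [hf.eventually (by norm_num)] with z hz
    exact hz.differentiableAt (by norm_num)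
  have hf2 : DifferentiableAt ℝ (fderiv ℝ f) p :=
    (hf.fderiv_right (m := 1) (le_refl _)).differentiableAt (by norm_num)
  -- the line map
  have hLcont : Continuous fun t : ℝ => p + t • w := by continuity
  have hL0 : (fun t : ℝ => p + t • w) 0 = p := by simp
  have hL : ∀ t : ℝ, HasDerivAt (fun t : ℝ => p + t • w) w t := by
    intro t
    have h1 : HasDerivAt (fun t : ℝ => t • w) ((1:ℝ) • w) t :=
      (hasDerivAt_id t).smul_const w
    simpa using h1.const_add p
  set g : ℝ → ℝ := fun t => f (p + t • w) with hgdef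
  have htend : Filter.Tendsto (fun t : ℝ => p + t • w) (nhds 0) (nhds p) := by
    simpa using hLcont.tendsto 0
  have hev : ∀ᶠ t in nhds (0:ℝ), DifferentiableAt ℝ f (p + t • w) :=
    htend.eventually hfd
  have hgder : ∀ᶠ t in nhds (0:ℝ), HasDerivAt g (fderiv ℝ f (p + t • w) w) t := by
    filter_upwards [hev] with t ht
    exact ht.hasFDerivAt.comp_hasDerivAt t (hL t)
  have hgdiff : ∀ᶠ t in nhds (0:ℝ), DifferentiableAt ℝ g t := by
    filter_upwards [hgder] with t ht using ht.differentiableAt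
  have hg_eq : deriv g =ᶠ[nhds (0:ℝ)] fun t => fderiv ℝ f (p + t • w) w := by
    filter_upwards [hgder] with t ht using ht.deriv
  -- second derivative of g at 0
  have hA0 : HasFDerivAt (fderiv ℝ f) (fderiv ℝ (fderiv ℝ f) p)
      ((fun t : ℝ => p + t • w) 0) := by
    rw [hL0]; exact hf2.hasFDerivAt
  have hA : HasDerivAt (fun t : ℝ => fderiv ℝ f (p + t • w))
      (fderiv ℝ (fderiv ℝ f) p w) 0 := hA0.comp_hasDerivAt 0 (hL 0)
  have hB : HasDerivAt (fun t : ℝ => fderiv ℝ f (p + t • w) w)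
      (fderiv ℝ (fderiv ℝ f) p w w) 0 := by
    have := hA.clm_apply (hasDerivAt_const (0:ℝ) w)
    simpa using this
  have hC : HasDerivAt (deriv g) (fderiv ℝ (fderiv ℝ f) p w w) 0 :=
    hB.congr_of_eventuallyEq hg_eq
  have hgmax : IsLocalMax g 0 := by
    have h2 := htend.eventually hmax
    have hg0 : g 0 = f p := by simp [hgdef]
    unfold IsLocalMax IsMaxFilter
    rw [hg0]
    exact h2
  exact second_deriv_nonpos_at_max g _ hgdiff hgmax hC

/-- Maximum-principle comparison: if on an open set `s`, `u` satisfies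
`Δu = 2e^u − 2e^{−(k−1)u}` and `v ≥ 0` satisfies
`Δv ≤ 2kv − k(k−2)v² ≤ 2e^v − 2e^{−(k−1)v}`, then for `η = u − v` the pointwise
inequality `Δη ≥ 2e^v(e^η − 1) − 2e^{−(k−1)v}(e^{−(k−1)η} − 1)` holds on `s`, and at any
interior maximum of `η` on `s` one has `η ≤ 0` (an interior positive maximum is
impossible). -/
theorem max_principle_comparison (k : ℕ) (hk : 3 ≤ k)
    (s : Set ℂ) (hs : IsOpen s) (u v : ℂ → ℝ)
    (hu : ContDiffOn ℝ 2 u s) (hv : ContDiffOn ℝ 2 v s)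
    (hueq : ∀ z ∈ s,
      lap u z = 2 * Real.exp (u z) - 2 * Real.exp (-((k : ℝ) - 1) * u z))
    (hv0 : ∀ z ∈ s, 0 ≤ v z)
    (hvsub : ∀ z ∈ s,
      lap v z ≤ 2 * (k : ℝ) * v z - (k : ℝ) * ((k : ℝ) - 2) * v z ^ 2)
    (hvcomp : ∀ z ∈ s,
      2 * (k : ℝ) * v z - (k : ℝ) * ((k : ℝ) - 2) * v z ^ 2 ≤
        2 * Real.exp (v z) - 2 * Real.exp (-((k : ℝ) - 1) * v z)) :
    (∀ z ∈ s,
      2 * Real.exp (v z) * (Real.exp (u z - v z) - 1) -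
          2 * Real.exp (-((k : ℝ) - 1) * v z) *
            (Real.exp (-((k : ℝ) - 1) * (u z - v z)) - 1) ≤
        lap (fun w => u w - v w) z) ∧
    (∀ p ∈ s, IsMaxOn (fun z => u z - v z) s p → u p - v p ≤ 0) := by
  have part1 : ∀ z ∈ s,
      2 * Real.exp (v z) * (Real.exp (u z - v z) - 1) -
          2 * Real.exp (-((k : ℝ) - 1) * v z) *
            (Real.exp (-((k : ℝ) - 1) * (u z - v z)) - 1) ≤
        lap (fun w => u w - v w) z := by
    intro z hz
    have hlapsub : lap (fun w => u w - v w) z = lap u z - lap v z := by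
      have key : ∀ m : Fin 2 → ℂ, iteratedFDeriv ℝ 2 (fun w => u w - v w) z m
          = iteratedFDeriv ℝ 2 u z m - iteratedFDeriv ℝ 2 v z m := by
        intro m
        rw [← iteratedFDerivWithin_of_isOpen 2 hs hz,
          ← iteratedFDerivWithin_of_isOpen 2 hs hz,
          ← iteratedFDerivWithin_of_isOpen 2 hs hz]
        have hadd := iteratedFDerivWithin_add_apply' (i := 2) (hu z hz) (hv z hz).neg
          hs.uniqueDiffOn hz
        have hneg' : iteratedFDerivWithin ℝ 2 (fun x => -v x) s z
            = -iteratedFDerivWithin ℝ 2 v s z :=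
          iteratedFDerivWithin_neg_apply hs.uniqueDiffOn hz
        simp only [sub_eq_add_neg]
        rw [hadd, hneg']
        simp
      simp only [lap, key]
      ring
    have h1 := hueq z hz
    have h2 := hvsub z hz
    have h3 := hvcomp z hz
    have e1 : Real.exp (v z) * Real.exp (u z - v z) = Real.exp (u z) := by
      rw [← Real.exp_add]; ring_nf
    have e2 : Real.exp (-((k:ℝ)-1) * v z) * Real.exp (-((k:ℝ)-1) * (u z - v z))
        = Real.exp (-((k:ℝ)-1) * u z) := by
      rw [← Real.exp_add]; ring_nf
    rw [hlapsub]
    nlinarith [e1, e2, h1, h2, h3]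
  refine ⟨part1, ?_⟩
  intro p hp hpmax
  by_contra hpos
  push_neg at hpos
  have hcd : ContDiffAt ℝ 2 (fun w => u w - v w) p :=
    (hu.sub hv).contDiffAt (hs.mem_nhds hp)
  have hlmax : IsLocalMax (fun z => u z - v z) p := hpmax.isLocalMax (hs.mem_nhds hp)
  have hlap : lap (fun w => u w - v w) p ≤ 0 := by
    have h1 := fderiv2_nonpos_at_max _ p 1 hcd hlmax
    have h2 := fderiv2_nonpos_at_max _ p Complex.I hcd hlmax
    simp only [lap, iteratedFDeriv_two_apply, Matrix.cons_val_zero, Matrix.cons_val_one,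
      Matrix.head_cons]
    linarith
  have hineq := part1 p hp
  have hkr : (1:ℝ) ≤ (k:ℝ) - 1 := by
    have : (3:ℝ) ≤ (k:ℝ) := by exact_mod_cast hk
    linarith
  have hev : 1 < Real.exp (u p - v p) := Real.one_lt_exp_iff.mpr hpos
  have hd1 : Real.exp (-((k:ℝ)-1) * (u p - v p)) < 1 := by
    apply Real.exp_lt_one_iff.mpr
    nlinarith
  have h3 : (1:ℝ) ≤ Real.exp (v p) := Real.one_le_exp_iff.mpr (hv0 p hp)
  have h4 : 0 < Real.exp (-((k:ℝ)-1) * v p) := Real.exp_pos _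
  nlinarith [mul_pos h4 (by linarith : (0:ℝ) < 1 - Real.exp (-((k:ℝ)-1) * (u p - v p))),
    mul_le_mul_of_nonneg_right h3 (by linarith : (0:ℝ) ≤ Real.exp (u p - v p) - 1)]
end

section
/- If A : [a,∞) → Mₙ(ℝ) is continuous and ∫ₐ^∞ ‖A(t)‖ dt < ∞, then every solution F of F'(t) = F(t)A(t) on [a,∞) converges: there exists F₀ ∈ GLₙ(ℝ) with F(t) → F₀ as t → ∞; moreover if F(a) is invertible then F₀ is invertible. -/
attribute [local instance] Matrix.linftyOpNormedRing Matrix.linftyOpNormedAlgebra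

open MeasureTheory Set Filter Real
open scoped Topology

namespace OdeIntegrableAux

variable {n : ℕ}

lemma det_row_bound (m : Fin n → Fin n → ℝ) :
    ‖Matrix.det (Matrix.of m)‖ ≤ (Nat.factorial n : ℝ) * ∏ i, ‖m i‖ := by
  classical
  rw [Matrix.det_apply]
  refine le_trans (norm_sum_le _ _) ?_
  have h2 : ∀ σ : Equiv.Perm (Fin n),
      ‖Equiv.Perm.sign σ • ∏ i, Matrix.of m (σ i) i‖ ≤ ∏ i, ‖m i‖ := by
    intro σ
    have he : ‖Equiv.Perm.sign σ • ∏ i, Matrix.of m (σ i) i‖ = ‖∏ i, m (σ i) i‖ := by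
      rcases Int.units_eq_one_or (Equiv.Perm.sign σ) with h | h <;>
        simp [h, Units.smul_def]
    rw [he, norm_prod]
    calc ∏ i, ‖m (σ i) i‖ ≤ ∏ i, ‖m (σ i)‖ := by
          refine Finset.prod_le_prod (fun _ _ => norm_nonneg _) (fun i _ => ?_)
          exact norm_le_pi_norm (m (σ i)) i
      _ = ∏ i, ‖m i‖ := Equiv.prod_comp σ (fun i => ‖m i‖)
  calc ∑ σ : Equiv.Perm (Fin n), ‖Equiv.Perm.sign σ • ∏ i, Matrix.of m (σ i) i‖
      ≤ ∑ _σ : Equiv.Perm (Fin n), ∏ i, ‖m i‖ := Finset.sum_le_sum (fun σ _ => h2 σ)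
    _ = (Nat.factorial n : ℝ) * ∏ i, ‖m i‖ := by
        simp [Finset.sum_const, Finset.card_univ, Fintype.card_perm, nsmul_eq_mul]

/-- The determinant, as a continuous multilinear map in the rows. -/
noncomputable def detL (n : ℕ) : ContinuousMultilinearMap ℝ (fun _ : Fin n => (Fin n → ℝ)) ℝ :=
  MultilinearMap.mkContinuous
    (Matrix.detRowAlternating : (Fin n → ℝ) [⋀^Fin n]→ₗ[ℝ] ℝ).toMultilinearMap
    (Nat.factorial n) (fun m => det_row_bound m)

lemma detL_apply (m : Fin n → Fin n → ℝ) : detL n m = Matrix.det (Matrix.of m) := rfl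

/-- Derivative of the determinant of a matrix-valued function, given entrywise derivatives. -/
lemma hasDerivAt_det {M : ℝ → Matrix (Fin n) (Fin n) ℝ} {M' : Matrix (Fin n) (Fin n) ℝ} {t : ℝ}
    (h : ∀ i j, HasDerivAt (fun s => M s i j) (M' i j) t) :
    HasDerivAt (fun s => (M s).det)
      (∑ i, ((M t).updateRow i (M' i)).det) t := by
  classical
  have hX : HasDerivAt (fun s => (fun i => M s i : ∀ _ : Fin n, Fin n → ℝ))
      (fun i => M' i) t :=
    hasDerivAt_pi.2 fun i => hasDerivAt_pi.2 fun j => h i j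
  have h3 := ((detL n).hasFDerivAt (x := fun i => M t i)).comp_hasDerivAt t hX
  have he : (fun s => (M s).det) = fun s => detL n (fun i => M s i) := rfl
  rw [he]
  refine h3.congr_deriv ?_
  rw [ContinuousMultilinearMap.linearDeriv_apply]
  rfl

lemma entry_abs_le (B : Matrix (Fin n) (Fin n) ℝ) (i j : Fin n) : |B i j| ≤ ‖B‖ := by
  classical
  rw [Matrix.linfty_opNorm_def]
  have h1 : ‖B i j‖₊ ≤ ∑ k, ‖B i k‖₊ :=
    Finset.single_le_sum (f := fun k => ‖B i k‖₊) (fun _ _ => zero_le) (Finset.mem_univ j)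
  have h2 : (∑ k, ‖B i k‖₊) ≤ Finset.univ.sup fun i => ∑ j, ‖B i j‖₊ :=
    Finset.le_sup (f := fun i => ∑ j, ‖B i j‖₊) (Finset.mem_univ i)
  have h3 := h1.trans h2
  have h4 : (‖B i j‖₊ : ℝ) ≤ ((Finset.univ.sup fun i => ∑ j, ‖B i j‖₊ : NNReal) : ℝ) := by
    exact_mod_cast h3
  simpa [Real.norm_eq_abs] using h4

end OdeIntegrableAux

open MeasureTheory Set Filter Real OdeIntegrableAux
open scoped Topology

/-- Integrable-coefficient ODE convergence: if `∫ₐ^∞ ‖A(t)‖ dt < ∞` then every solution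
of `F' = F·A` on `[a,∞)` converges to some matrix `F₀` as `t → ∞`, and `F₀` is
invertible whenever `F(a)` is. -/
theorem ode_integrable_coefficient_limit (n : ℕ) (a : ℝ)
    (A F : ℝ → Matrix (Fin n) (Fin n) ℝ)
    (hA : ContinuousOn A (Set.Ici a))
    (hint : MeasureTheory.IntegrableOn (fun t => ‖A t‖) (Set.Ici a))
    (hF : ∀ t ∈ Set.Ici a, HasDerivAt F (F t * A t) t) :
    ∃ F₀ : Matrix (Fin n) (Fin n) ℝ,
      Filter.Tendsto F Filter.atTop (nhds F₀) ∧ (IsUnit (F a) → IsUnit F₀) := by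
  classical
  -- continuous extension of `A` to all of `ℝ`
  have hAc : Continuous fun s => A (max s a) :=
    hA.comp_continuous (continuous_id.max continuous_const) fun x => le_max_right x a
  set g : ℝ → ℝ := fun s => ‖A (max s a)‖ with hg_def
  have hgc : Continuous g := hAc.norm
  have hg0 : ∀ s, 0 ≤ g s := fun s => norm_nonneg _
  have hgA : ∀ s, a ≤ s → g s = ‖A s‖ := fun s hs => by
    simp only [hg_def, max_eq_left hs]
  -- F continuous on Ici a
  have hFc : ∀ t ∈ Ici a, ContinuousAt F t := fun t ht => (hF t ht).continuousAt
  have hFcOn : ContinuousOn F (Ici a) := fun t ht => (hFc t ht).continuousWithinAt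
  -- total integral
  set Itot : ℝ := ∫ s in Ici a, ‖A s‖ with hItot_def
  have hIg : ∀ t, a ≤ t → (∫ s in a..t, g s) ≤ Itot := by
    intro t ht
    rw [intervalIntegral.integral_of_le ht]
    have hcongr : ∫ s in Ioc a t, g s = ∫ s in Ioc a t, ‖A s‖ := by
      refine setIntegral_congr_fun measurableSet_Ioc (fun s hs => ?_)
      exact hgA s hs.1.le
    rw [hcongr]
    refine setIntegral_mono_set hint ?_ ?_
    · exact Eventually.of_forall fun s => norm_nonneg _
    · exact HasSubset.Subset.eventuallyLE (Ioc_subset_Icc_self.trans Icc_subset_Ici_self)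
  have hItot0 : 0 ≤ Itot := by
    have := hIg a le_rfl
    simpa using this.trans' (by simp)
  -- Gronwall: ‖F t‖ ≤ ‖F a‖ * exp (∫ a..t g)
  have key : ∀ t, a ≤ t → ‖F t‖ ≤ ‖F a‖ * Real.exp (∫ s in a..t, g s) := by
    intro t ht
    have hI : ∀ u : ℝ, HasDerivAt (fun v => ∫ s in a..v, g s) (g u) u :=
      fun u => (hgc.integral_hasStrictDerivAt a u).hasDerivAt
    have hε : ∀ ε > (0:ℝ), ‖F t‖ ≤
        (‖F a‖ + ε) * Real.exp ((∫ s in a..t, g s) + ε * (t - a)) := by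
      intro ε hε
      set B : ℝ → ℝ := fun u => (‖F a‖ + ε) * Real.exp ((∫ s in a..u, g s) + ε * (u - a))
        with hB_def
      have hBpos : ∀ u, 0 < B u := fun u =>
        mul_pos (by positivity) (Real.exp_pos _)
      have hB : ∀ u : ℝ, HasDerivAt B ((g u + ε) * B u) u := by
        intro u
        have h1 : HasDerivAt (fun v => (∫ s in a..v, g s) + ε * (v - a)) (g u + ε) u := by
          have h2 : HasDerivAt (fun v : ℝ => ε * (v - a)) ε u := by
            simpa using ((hasDerivAt_id u).sub_const a).const_mul ε
          exact (hI u).add h2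
        have h3 := (h1.exp).const_mul (‖F a‖ + ε)
        refine h3.congr_deriv ?_
        simp [hB_def]
        ring
      have hres := image_norm_le_of_norm_deriv_right_lt_deriv_boundary
        (f := F) (f' := fun u => F u * A u) (a := a) (b := t)
        (fun u hu => (hFcOn u (hu.1 : a ≤ u)).mono Icc_subset_Ici_self)
        (fun u hu => (hF u hu.1).hasDerivWithinAt)
        (by
          simp only [hB_def, intervalIntegral.integral_same]
          have : (0:ℝ) + ε * (a - a) = 0 := by ring
          rw [this, Real.exp_zero, mul_one]
          linarith [hε])
        hB
        (by
          intro u hu hFu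
          have h1 : ‖F u * A u‖ ≤ ‖F u‖ * ‖A u‖ := norm_mul_le _ _
          have h2 : ‖A u‖ = g u := (hgA u hu.1).symm
          rw [hFu] at h1
          calc ‖F u * A u‖ ≤ B u * ‖A u‖ := h1
            _ = g u * B u := by rw [h2]; ring
            _ < (g u + ε) * B u := by
                have := hBpos u
                nlinarith)
      exact hres (right_mem_Icc.2 ht)
    -- let ε → 0⁺
    have hcont : ContinuousWithinAt
        (fun ε => (‖F a‖ + ε) * Real.exp ((∫ s in a..t, g s) + ε * (t - a))) (Ioi 0) 0 := by
      apply Continuous.continuousWithinAt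
      continuity
    have hcl : (0:ℝ) ∈ closure (Ioi (0:ℝ)) := by
      rw [closure_Ioi]; exact self_mem_Ici
    have hle := continuousWithinAt_const.closure_le hcl hcont
      (fun ε hε' => hε ε hε') (f := fun _ => ‖F t‖)
    simpa using hle
  -- uniform bound
  set C : ℝ := ‖F a‖ * Real.exp Itot with hC_def
  have hC0 : 0 ≤ C := mul_nonneg (norm_nonneg _) (Real.exp_pos _).le
  have hbound : ∀ t, a ≤ t → ‖F t‖ ≤ C := by
    intro t ht
    refine (key t ht).trans ?_
    exact mul_le_mul_of_nonneg_left (Real.exp_le_exp.2 (hIg t ht)) (norm_nonneg _)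
  -- integrability of F * A on Ici a
  have hFAcOn : ContinuousOn (fun s => F s * A s) (Ici a) := hFcOn.mul hA
  haveI : TopologicalSpace.PseudoMetrizableSpace (Matrix (Fin n) (Fin n) ℝ) := inferInstanceAs (TopologicalSpace.PseudoMetrizableSpace (Fin n → Fin n → ℝ))
  letI : TopologicalSpace (Matrix (Fin n) (Fin n) ℝ) := (SeminormedAddGroup.toPseudoMetricSpace).toUniformSpace.toTopologicalSpace
  have hintFA : IntegrableOn (fun s => F s * A s) (Ici a) := by
    refine Integrable.mono (hint.const_mul C) (hFAcOn.aestronglyMeasurable measurableSet_Ici) ?_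
    refine (ae_restrict_iff' measurableSet_Ici).2 (Eventually.of_forall fun s hs => ?_)
    calc ‖F s * A s‖ ≤ ‖F s‖ * ‖A s‖ := norm_mul_le _ _
      _ ≤ C * ‖A s‖ := mul_le_mul_of_nonneg_right (hbound s hs) (norm_nonneg _)
      _ ≤ ‖C * ‖A s‖‖ := le_abs_self _
  have hintFAIoi : IntegrableOn (fun s => F s * A s) (Ioi a) :=
    hintFA.mono_set Ioi_subset_Ici_self
  -- FTC
  have hFTC : ∀ t, a ≤ t → F t = F a + ∫ s in a..t, F s * A s := by
    intro t ht
    have hii : IntervalIntegrable (fun s => F s * A s) volume a t :=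
      (hFAcOn.mono (Icc_subset_Ici_self (a := t) (b := a))).intervalIntegrable_of_Icc ht
    have := intervalIntegral.integral_eq_sub_of_hasDerivAt
      (f := F) (f' := fun s => F s * A s)
      (fun u hu => hF u (by
        rw [uIcc_of_le ht] at hu
        exact hu.1)) hii
    rw [this]
    abel
  -- the limit
  refine ⟨F a + ∫ s in Ioi a, F s * A s, ?_, ?_⟩
  · have h1 := (intervalIntegral_tendsto_integral_Ioi a hintFAIoi tendsto_id).const_add (F a)
    refine h1.congr' ?_
    filter_upwards [eventually_ge_atTop a] with t ht
    exact (hFTC t ht).symm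
  · -- invertibility
    intro hu
    have hdeta : (F a).det ≠ 0 := by
      intro h0
      rw [Matrix.isUnit_iff_isUnit_det, isUnit_iff_ne_zero] at hu
      exact hu h0
    -- trace function
    set τ : ℝ → ℝ := fun s => Matrix.trace (A (max s a)) with hτ_def
    have hτc : Continuous τ := hAc.matrix_trace
    have hτbound : ∀ s, |τ s| ≤ (n : ℝ) * g s := by
      intro s
      calc |τ s| = |∑ i, A (max s a) i i| := by simp [hτ_def, Matrix.trace]
        _ ≤ ∑ i, |A (max s a) i i| := Finset.abs_sum_le_sum_abs _ _
        _ ≤ ∑ _i : Fin n, g s := Finset.sum_le_sum fun i _ => entry_abs_le _ i i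
        _ = (n : ℝ) * g s := by simp [mul_comm]
    set J : ℝ → ℝ := fun u => ∫ s in a..u, τ s with hJ_def
    have hJ : ∀ u : ℝ, HasDerivAt J (τ u) u :=
      fun u => (hτc.integral_hasStrictDerivAt a u).hasDerivAt
    -- derivative of det F
    have hdet : ∀ u, a ≤ u →
        HasDerivAt (fun s => (F s).det) (Matrix.trace (A u) * (F u).det) u := by
      intro u hu
      have hentry : ∀ i j : Fin n, HasDerivAt (fun s => F s i j) ((F u * A u) i j) u := by
        intro i j
        have := ((LinearMap.toContinuousLinearMap
          ({ toFun := fun B : Matrix (Fin n) (Fin n) ℝ => B i j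
             map_add' := fun _ _ => rfl
             map_smul' := fun _ _ => rfl } :
            Matrix (Fin n) (Fin n) ℝ →ₗ[ℝ] ℝ)).hasFDerivAt (x := F u)).comp_hasDerivAt
          u (hF u hu)
        exact this
      have hT : ∀ i j : Fin n,
          HasDerivAt (fun s => (F s).transpose i j) ((F u * A u).transpose i j) u := by
        intro i j
        simpa [Matrix.transpose_apply] using hentry j i
      have hD := hasDerivAt_det (M := fun s => (F s).transpose) (M' := (F u * A u).transpose) hT
      have heq : (fun s => (F s).det) = fun s => ((F s).transpose).det := by
        funext s; rw [Matrix.det_transpose]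
      rw [heq]
      convert hD using 1
      have hrow : ∀ i : Fin n, (F u * A u).transpose i = ∑ j, A u j i • (F u).transpose j := by
        intro i
        funext k
        simp [Matrix.transpose_apply, Matrix.mul_apply, Finset.sum_apply, mul_comm]
      calc Matrix.trace (A u) * (F u).det
          = ∑ i, A u i i * ((F u).transpose).det := by
            rw [Matrix.det_transpose, Matrix.trace, Finset.sum_mul]
            simp [Matrix.diag]
        _ = ∑ i, (((F u).transpose).updateRow i ((F u * A u).transpose i)).det := by
            refine Finset.sum_congr rfl fun i _ => ?_
            rw [hrow i, Matrix.det_updateRow_sum]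
            simp [smul_eq_mul]
  -- Liouville: det F t = det F a * exp (J t)
    have hLiou : ∀ t, a ≤ t → (F t).det = (F a).det * Real.exp (J t) := by
      intro t ht
      set h : ℝ → ℝ := fun u => (F u).det * Real.exp (-J u) with hh_def
      have hh' : ∀ u ∈ Ico a t, HasDerivWithinAt h 0 (Ici u) u := by
        intro u hu
        have h1 := (hdet u hu.1).mul (((hJ u).neg).exp)
        have h0 : HasDerivAt h 0 u := by
          refine h1.congr_deriv ?_
          have hτu : τ u = Matrix.trace (A u) := by simp [hτ_def, max_eq_left hu.1]
          rw [hτu]; ring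
        exact h0.hasDerivWithinAt
      have hhc : ContinuousOn h (Icc a t) := by
        apply ContinuousOn.mul
        · exact ((Continuous.matrix_det continuous_id).comp_continuousOn
            (hFcOn.mono Icc_subset_Ici_self))
        · have hJc : Continuous J := continuous_iff_continuousAt.2 fun u => (hJ u).continuousAt
          exact (hJc.neg.rexp).continuousOn
      have := constant_of_has_deriv_right_zero hhc hh' t (right_mem_Icc.2 ht)
      have hJa : J a = 0 := by simp [hJ_def]
      rw [hh_def] at this
      simp only [hJa, neg_zero, Real.exp_zero, mul_one] at this
      calc (F t).det = (F t).det * Real.exp (-J t) * Real.exp (J t) := by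
            rw [mul_assoc, ← Real.exp_add]; simp
        _ = (F a).det * Real.exp (J t) := by rw [this]
    -- lower bound on |det F t|
    set δ : ℝ := |(F a).det| * Real.exp (-((n : ℝ) * Itot)) with hδ_def
    have hδ0 : 0 < δ := mul_pos (abs_pos.2 hdeta) (Real.exp_pos _)
    have hJlow : ∀ t, a ≤ t → -((n : ℝ) * Itot) ≤ J t := by
      intro t ht
      have h1 : |J t| ≤ ∫ s in a..t, |τ s| :=
        intervalIntegral.abs_integral_le_integral_abs ht
      have h2 : (∫ s in a..t, |τ s|) ≤ ∫ s in a..t, (n : ℝ) * g s := by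
        refine intervalIntegral.integral_mono_on ht ?_ ?_ (fun s _ => hτbound s)
        · exact (hτc.abs.intervalIntegrable a t)
        · exact ((continuous_const.mul hgc).intervalIntegrable a t)
      have h3 : (∫ s in a..t, (n : ℝ) * g s) ≤ (n : ℝ) * Itot := by
        rw [intervalIntegral.integral_const_mul]
        exact mul_le_mul_of_nonneg_left (hIg t ht) (Nat.cast_nonneg n)
      have := (abs_le.1 (h1.trans (h2.trans h3))).1
      linarith
    have hlow : ∀ t, a ≤ t → δ ≤ |(F t).det| := by
      intro t ht
      rw [hLiou t ht, abs_mul, abs_of_pos (Real.exp_pos _)]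
      exact mul_le_mul_of_nonneg_left (Real.exp_le_exp.2 (hJlow t ht)) (abs_nonneg _)
    -- conclude
    have htends : Tendsto F atTop (𝓝 (F a + ∫ s in Ioi a, F s * A s)) := by
      have h1 := (intervalIntegral_tendsto_integral_Ioi a hintFAIoi tendsto_id).const_add (F a)
      refine h1.congr' ?_
      filter_upwards [eventually_ge_atTop a] with t ht
      exact (hFTC t ht).symm
    have hdt : Tendsto (fun t => |(F t).det|) atTop
        (𝓝 |(F a + ∫ s in Ioi a, F s * A s).det|) := by
      have hcd : Continuous fun M : Matrix (Fin n) (Fin n) ℝ => |M.det| :=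
        (Continuous.matrix_det continuous_id).abs
      exact (hcd.tendsto _).comp htends
    have hfin : δ ≤ |(F a + ∫ s in Ioi a, F s * A s).det| := by
      refine ge_of_tendsto hdt ?_
      filter_upwards [eventually_ge_atTop a] with t ht
      exact hlow t ht
    rw [Matrix.isUnit_iff_isUnit_det, isUnit_iff_ne_zero]
    intro h0
    rw [h0] at hfin
    simp at hfin
    linarith
end

section
/- Let X ∈ Mₙ(ℝ). There exist M, C, δ₁ > 0 (depending on X, M) such that: if s : [a,b] → ℝ and B : [a,b] → Mₙ(ℝ) are continuous with ∫ₐᵇ |s(t)| dt < M and ‖B(t)‖ < δ < δ₁ for all t, then the solution F of F'(t) = F(t)(s(t)X + B(t)) with F(a) = I satisfies ‖F(t) − exp((∫ₐᵗ s(τ)dτ)·X)‖ ≤ Cδ for all t ∈ [a,b]. -/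
attribute [local instance] Matrix.linftyOpNormedRing Matrix.linftyOpNormedAlgebra

lemma my_norm_exp_le {A : Type*} [NormedRing A] [NormedAlgebra ℝ A] [CompleteSpace A]
    (h1 : ‖(1 : A)‖ ≤ 1) (x : A) : ‖NormedSpace.exp x‖ ≤ Real.exp ‖x‖ := by
  have hsum : HasSum (fun n : ℕ => ((n.factorial : ℝ)⁻¹ : ℝ) • ‖x‖ ^ n) (Real.exp ‖x‖) := by
    rw [Real.exp_eq_exp_ℝ, congrFun (NormedSpace.exp_eq_tsum (𝕂 := ℝ)) ‖x‖]
    exact (NormedSpace.expSeries_summable' (𝕂 := ℝ) ‖x‖).hasSum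
  rw [congrFun (NormedSpace.exp_eq_tsum (𝕂 := ℝ)) x]
  refine tsum_of_norm_bounded hsum ?_
  intro n
  rw [norm_smul, norm_inv, Real.norm_natCast, smul_eq_mul]
  have hx : ‖x ^ n‖ ≤ ‖x‖ ^ n := by
    cases n with
    | zero => simpa using h1
    | succ m => exact norm_pow_le' x (Nat.succ_pos m)
  have : (0:ℝ) ≤ ((n.factorial : ℝ))⁻¹ := by positivity
  exact mul_le_mul_of_nonneg_left hx this

lemma my_exp_sub_one_le (y : ℝ) : Real.exp y - 1 ≤ y * Real.exp y := by
  have h := Real.add_one_le_exp (-y)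
  have h2 := mul_le_mul_of_nonneg_right h (Real.exp_pos y).le
  rw [← Real.exp_add, neg_add_cancel, Real.exp_zero] at h2
  nlinarith

/-- Nearly-abelian ODE estimate: fix `X ∈ Mₙ(ℝ)`, an interval `[a,b]`, and a mass bound
`M > 0`.  There are constants `C, δ₁ > 0` such that if `A(t) = s(t)·X + B(t)` with
`∫ₐᵇ |s| < M` and `‖B(t)‖ < δ < δ₁`, then the solution of `F' = F·A` with `F(a) = I`
satisfies `‖F(t) − exp((∫ₐᵗ s)·X)‖ ≤ Cδ` on `[a,b]`. -/
theorem ode_nearly_abelian (n : ℕ) (X : Matrix (Fin n) (Fin n) ℝ)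
    (a b : ℝ) (hab : a ≤ b) (M : ℝ) (hM : 0 < M) :
    ∃ C δ₁ : ℝ, 0 < C ∧ 0 < δ₁ ∧
      ∀ (s : ℝ → ℝ) (B F : ℝ → Matrix (Fin n) (Fin n) ℝ) (δ : ℝ), δ < δ₁ →
        ContinuousOn s (Set.Icc a b) → ContinuousOn B (Set.Icc a b) →
        (∫ t in a..b, |s t|) < M →
        (∀ t ∈ Set.Icc a b, ‖B t‖ < δ) →
        (∀ t ∈ Set.Icc a b, HasDerivAt F (F t * (s t • X + B t)) t) →
        F a = 1 →
        ∀ t ∈ Set.Icc a b,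
          ‖F t - NormedSpace.exp ((∫ τ in a..t, s τ) • X)‖ ≤ C * δ := by
  have h1 : ‖(1 : Matrix (Fin n) (Fin n) ℝ)‖ ≤ 1 := by
    rcases Nat.eq_zero_or_pos n with hn | hn
    · subst hn
      have : (1 : Matrix (Fin 0) (Fin 0) ℝ) = 0 := by ext i j; exact i.elim0
      simp [this]
    · haveI : Nonempty (Fin n) := ⟨⟨0, hn⟩⟩
      exact le_of_eq norm_one
  set K := Real.exp (M * ‖X‖) with hKdef
  have hK1 : 1 ≤ K := Real.one_le_exp (by positivity)
  have hK0 : 0 < K := lt_of_lt_of_le one_pos hK1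
  have hba : (0:ℝ) ≤ b - a := sub_nonneg.2 hab
  refine ⟨K ^ 3 * (b - a) * Real.exp (K ^ 2 * (b - a)) + 1, 1, ?_, one_pos, ?_⟩
  · have : 0 ≤ K ^ 3 * (b - a) * Real.exp (K ^ 2 * (b - a)) := by positivity
    linarith
  intro s B F δ hδ1 hs hB hsM hBδ hF hFa
  have haI : a ∈ Set.Icc a b := ⟨le_rfl, hab⟩
  have hδ0 : 0 < δ := lt_of_le_of_lt (norm_nonneg (B a)) (hBδ a haI)
  set u : ℝ → ℝ := fun t => ∫ τ in a..t, s τ with hudef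
  set G : ℝ → Matrix (Fin n) (Fin n) ℝ := fun t => NormedSpace.exp (u t • X) with hGdef
  set Gi : ℝ → Matrix (Fin n) (Fin n) ℝ := fun t => NormedSpace.exp ((-u t) • X) with hGidef
  have hsint : ∀ t ∈ Set.Icc a b, IntervalIntegrable s MeasureTheory.volume a t := by
    intro t ht
    refine ContinuousOn.intervalIntegrable (hs.mono ?_)
    rw [Set.uIcc_of_le ht.1]
    exact Set.Icc_subset_Icc le_rfl ht.2
  have hGiG : ∀ t, Gi t * G t = 1 := by
    intro t
    rw [hGidef, hGdef]
    beta_reduce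
    refine (NormedSpace.exp_add_of_commute (((Commute.refl X).smul_left (-u t)).smul_right (u t))).symm.trans ?_
    simp [NormedSpace.exp_zero]
  have huM : ∀ t ∈ Set.Icc a b, |u t| ≤ M := by
    intro t ht
    have h2 : |u t| ≤ ∫ τ in a..t, |s τ| :=
      intervalIntegral.abs_integral_le_integral_abs ht.1
    have h3 : (∫ τ in a..t, |s τ|) ≤ ∫ τ in a..b, |s τ| := by
      refine intervalIntegral.integral_mono_interval le_rfl ht.1 ht.2 ?_ ?_
      · filter_upwards with x using abs_nonneg _
      · exact ContinuousOn.intervalIntegrable (by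
          rw [Set.uIcc_of_le hab]; exact hs.abs)
    linarith
  have hnormG : ∀ t ∈ Set.Icc a b, ‖G t‖ ≤ K := by
    intro t ht
    refine (my_norm_exp_le h1 _).trans ?_
    rw [hKdef]
    apply Real.exp_le_exp.2
    rw [norm_smul, Real.norm_eq_abs]
    exact mul_le_mul_of_nonneg_right (huM t ht) (norm_nonneg X)
  have hnormGi : ∀ t ∈ Set.Icc a b, ‖Gi t‖ ≤ K := by
    intro t ht
    refine (my_norm_exp_le h1 _).trans ?_
    rw [hKdef]
    apply Real.exp_le_exp.2
    rw [norm_smul, Real.norm_eq_abs, abs_neg]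
    exact mul_le_mul_of_nonneg_right (huM t ht) (norm_nonneg X)
  have hu' : ∀ x ∈ Set.Ico a b, HasDerivWithinAt u (s x) (Set.Ici x) x := by
    intro x hx
    have hxI : x ∈ Set.Icc a b := ⟨hx.1, hx.2.le⟩
    have hmem : Set.Ioc x b ∈ nhdsWithin x (Set.Ioi x) :=
      Ioc_mem_nhdsGT hx.2
    refine intervalIntegral.integral_hasDerivWithinAt_right (hsint x hxI)
      ⟨Set.Ioc x b, hmem, ?_⟩ ?_
    · exact ((hs.mono (fun y hy => ⟨hx.1.trans hy.1.le, hy.2⟩)).aestronglyMeasurable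
        measurableSet_Ioc)
    · have hcw : ContinuousWithinAt s (Set.Ioc x b) x :=
        (hs x hxI).mono (fun y hy => ⟨hx.1.trans hy.1.le, hy.2⟩)
      exact hcw.mono_of_mem_nhdsWithin hmem
  have hGi' : ∀ x ∈ Set.Ico a b,
      HasDerivWithinAt Gi ((-s x) • (Gi x * X)) (Set.Ici x) x := by
    intro x hx
    have hneg : HasDerivWithinAt (fun t => -u t) (-s x) (Set.Ici x) x := (hu' x hx).neg
    have h2 := hasDerivAt_exp_smul_const (𝕂 := ℝ) X (-u x)
    have h3 := HasDerivAt.scomp_hasDerivWithinAt x h2 hneg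
    simp [Function.comp_def, hGidef, smul_smul] at h3 ⊢
    exact h3
  set f : ℝ → Matrix (Fin n) (Fin n) ℝ := fun t => F t * Gi t - 1 with hfdef
  have hXGi : ∀ x, X * Gi x = Gi x * X := by
    intro x
    exact (((Commute.refl X).smul_right (-u x)).exp_right).eq
  have hf' : ∀ x ∈ Set.Ico a b,
      HasDerivWithinAt f (F x * B x * Gi x) (Set.Ici x) x := by
    intro x hx
    have hxI : x ∈ Set.Icc a b := ⟨hx.1, hx.2.le⟩
    have h3 := ((hF x hxI).hasDerivWithinAt.mul (hGi' x hx)).sub_const 1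
    have heq : F x * (s x • X + B x) * Gi x + F x * ((-s x) • (Gi x * X))
        = F x * B x * Gi x := by
      rw [← hXGi x]
      have e1 : F x * (s x • X + B x) * Gi x
          = s x • (F x * (X * Gi x)) + F x * B x * Gi x := by
        rw [mul_add, add_mul, mul_smul_comm, smul_mul_assoc, mul_assoc]
      have e2 : F x * ((-s x) • (X * Gi x)) = -(s x • (F x * (X * Gi x))) := by
        rw [mul_smul_comm, neg_smul]
      rw [e1, e2]
      abel
    rwa [heq] at h3
  have hFc : ContinuousOn F (Set.Icc a b) := fun t ht =>
    (hF t ht).continuousAt.continuousWithinAt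
  have huc : ContinuousOn u (Set.Icc a b) := by
    have hint : IntervalIntegrable s MeasureTheory.volume a b := hsint b ⟨hab, le_rfl⟩
    have := intervalIntegral.continuousOn_primitive_interval' hint
      (by rw [Set.uIcc_of_le hab]; exact haI)
    rwa [Set.uIcc_of_le hab] at this
  have hGic : ContinuousOn Gi (Set.Icc a b) :=
    NormedSpace.exp_continuous.comp_continuousOn ((huc.neg).smul continuousOn_const)
  have hfc : ContinuousOn f (Set.Icc a b) := (hFc.mul hGic).sub continuousOn_const
  have hfa : f a = 0 := by
    rw [hfdef]
    simp only [hFa, one_mul, hGidef, hudef]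
    rw [intervalIntegral.integral_same]
    simp [NormedSpace.exp_zero]
  have hFeq : ∀ x, F x = (f x + 1) * G x := by
    intro x
    rw [hfdef]
    simp only [sub_add_cancel]
    rw [mul_assoc, hGiG, mul_one]
  have hbound : ∀ x ∈ Set.Ico a b,
      ‖F x * B x * Gi x‖ ≤ (K ^ 2 * δ) * ‖f x‖ + K ^ 2 * δ := by
    intro x hx
    have hxI : x ∈ Set.Icc a b := ⟨hx.1, hx.2.le⟩
    have h5 : ‖F x * B x * Gi x‖ ≤ ‖F x‖ * ‖B x‖ * ‖Gi x‖ :=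
      (norm_mul_le _ _).trans
        (mul_le_mul_of_nonneg_right (norm_mul_le _ _) (norm_nonneg _))
    have hFx : ‖F x‖ ≤ (‖f x‖ + 1) * K := by
      rw [hFeq x]
      refine (norm_mul_le _ _).trans ?_
      have : ‖f x + 1‖ ≤ ‖f x‖ + 1 := (norm_add_le _ _).trans (by linarith)
      exact mul_le_mul this (hnormG x hxI) (norm_nonneg _) (by positivity)
    have hBx := (hBδ x hxI).le
    have hGix := hnormGi x hxI
    have h0f : (0:ℝ) ≤ ‖f x‖ := norm_nonneg _
    have h0B : (0:ℝ) ≤ ‖B x‖ := norm_nonneg _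
    have h0Gi : (0:ℝ) ≤ ‖Gi x‖ := norm_nonneg _
    have h0F : (0:ℝ) ≤ ‖F x‖ := norm_nonneg _
    nlinarith [mul_le_mul hFx hBx h0B (by positivity : (0:ℝ) ≤ (‖f x‖ + 1) * K),
      mul_le_mul (mul_le_mul hFx hBx h0B (by positivity : (0:ℝ) ≤ (‖f x‖ + 1) * K)) hGix h0Gi
        (by positivity : (0:ℝ) ≤ (‖f x‖ + 1) * K * δ)]
  have hKδ0 : (0:ℝ) < K ^ 2 * δ := by positivity
  have hgron := norm_le_gronwallBound_of_norm_deriv_right_le (δ := 0) hfc hf'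
    (by rw [hfa, norm_zero]) hbound
  intro t ht
  have hft : ‖f t‖ ≤ Real.exp (K ^ 2 * δ * (t - a)) - 1 := by
    have h9 := hgron t ht
    rw [gronwallBound_of_K_ne_0 (ne_of_gt hKδ0)] at h9
    simpa only [zero_mul, zero_add, div_self (ne_of_gt hKδ0), one_mul] using h9
  have hFG : F t - G t = f t * G t := by
    rw [hfdef]
    rw [sub_mul, one_mul, mul_assoc, hGiG, mul_one]
  set y := K ^ 2 * δ * (t - a) with hydef
  have hta : 0 ≤ t - a := sub_nonneg.2 ht.1
  have htb : t - a ≤ b - a := by linarith [ht.2]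
  have hy0 : 0 ≤ y := by
    rw [hydef]
    exact mul_nonneg (mul_nonneg (by positivity) hδ0.le) hta
  have h0e : (0:ℝ) ≤ Real.exp y - 1 := le_trans (norm_nonneg (f t)) hft
  have hmain : ‖F t - G t‖ ≤ (Real.exp y - 1) * K := by
    rw [hFG]
    exact (norm_mul_le _ _).trans (mul_le_mul hft (hnormG t ht) (norm_nonneg _) h0e)
  have hy1 : y ≤ K ^ 2 * δ * (b - a) := by
    rw [hydef]
    exact mul_le_mul_of_nonneg_left htb (by positivity)
  have hy2 : y ≤ K ^ 2 * (b - a) := by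
    have : K ^ 2 * δ * (b - a) ≤ K ^ 2 * 1 * (b - a) :=
      mul_le_mul_of_nonneg_right (mul_le_mul_of_nonneg_left hδ1.le (by positivity)) hba
    rw [mul_one] at this
    linarith
  have hexp : Real.exp y - 1 ≤ y * Real.exp y := my_exp_sub_one_le y
  have hexp2 : Real.exp y ≤ Real.exp (K ^ 2 * (b - a)) := Real.exp_le_exp.2 hy2
  have hδba : (0:ℝ) ≤ K ^ 2 * δ * (b - a) := mul_nonneg (mul_nonneg (by positivity) hδ0.le) hba
  have h6 : y * Real.exp y ≤ K ^ 2 * δ * (b - a) * Real.exp (K ^ 2 * (b - a)) :=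
    mul_le_mul hy1 hexp2 (Real.exp_pos y).le hδba
  have hfinal : (Real.exp y - 1) * K ≤ (K ^ 3 * (b - a) * Real.exp (K ^ 2 * (b - a)) + 1) * δ := by
    calc (Real.exp y - 1) * K ≤ (y * Real.exp y) * K :=
          mul_le_mul_of_nonneg_right hexp hK0.le
      _ ≤ (K ^ 2 * δ * (b - a) * Real.exp (K ^ 2 * (b - a))) * K :=
          mul_le_mul_of_nonneg_right h6 hK0.le
      _ = (K ^ 3 * (b - a) * Real.exp (K ^ 2 * (b - a))) * δ := by ring
      _ ≤ (K ^ 3 * (b - a) * Real.exp (K ^ 2 * (b - a)) + 1) * δ :=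
          mul_le_mul_of_nonneg_right (by linarith) hδ0.le
  have hGt : F t - NormedSpace.exp ((∫ τ in a..t, s τ) • X) = F t - G t := rfl
  rw [hGt]
  exact hmain.trans hfinal
end
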